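/- arXiv:2002.01013 — 7 statements merged into one kernel-verified Lean document; each statement's English description precedes it below -/
import Mathlib

section
/- Let d ≥ 1, σ > 0, and let P be a Borel probability measure on ℝ^d satisfying ∫_{ℝ^d} √(Var_P(φ_σ(x−·))) dx < ∞. Let X_1,…,X_n be i.i.d. with law P and let P_n be the empirical measure. Then for every n ≥ 1, E[δ_TV(P_n∗N_σ, P∗N_σ)] ≤ (1/(2√n)) ∫_{ℝ^d} √(Var_P(φ_σ(x−·))) dx. -/
set_option maxHeartbeats 1000000


open MeasureTheory ProbabilityTheory Real Filter
open scoped ENNReal NNReal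

/-- The isotropic Gaussian density `φ_σ` on `ℝ^d`. -/
noncomputable def gaussDensity (d : ℕ) (σ : ℝ) (x : EuclideanSpace ℝ (Fin d)) : ℝ :=
  (2 * π * σ ^ 2) ^ (-(d : ℝ) / 2) * Real.exp (-‖x‖ ^ 2 / (2 * σ ^ 2))

/-- The isotropic Gaussian measure `N_σ = N(0, σ² I_d)` on `ℝ^d`. -/
noncomputable def gaussMeasure (d : ℕ) (σ : ℝ) : Measure (EuclideanSpace ℝ (Fin d)) :=
  volume.withDensity fun x => ENNReal.ofReal (gaussDensity d σ x)

/-- Convolution of two measures. -/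
noncomputable def mconv {α : Type*} [MeasurableSpace α] [Add α] (μ ν : Measure α) : Measure α :=
  (μ.prod ν).map fun p => p.1 + p.2

/-- Total variation distance: supremum over Borel sets of `|μ(A) − ν(A)|`. -/
noncomputable def tvDist {α : Type*} [MeasurableSpace α] (μ ν : Measure α) : ℝ :=
  ⨆ A : {s : Set α // MeasurableSet s}, |(μ A).toReal - (ν A).toReal|

/-- Empirical measure `P_n = n⁻¹ ∑_{i<n} δ_{X_i(ω)}`. -/
noncomputable def empMeasure {Ω : Type*} [MeasurableSpace Ω] {d : ℕ}
    (X : ℕ → Ω → EuclideanSpace ℝ (Fin d)) (n : ℕ) (ω : Ω) :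
    Measure (EuclideanSpace ℝ (Fin d)) :=
  (n : ℝ≥0∞)⁻¹ • ∑ i ∈ Finset.range n, Measure.dirac (X i ω)

lemma gd_nonneg (d : ℕ) (σ : ℝ) (x : EuclideanSpace ℝ (Fin d)) : 0 ≤ gaussDensity d σ x := by
  unfold gaussDensity
  positivity

lemma gd_cont (d : ℕ) (σ : ℝ) : Continuous (gaussDensity d σ) := by
  unfold gaussDensity
  exact continuous_const.mul (Real.continuous_exp.comp
    (((continuous_norm.pow 2).neg).div_const _))

lemma gd_le {d : ℕ} {σ : ℝ} (hσ : 0 < σ) (x : EuclideanSpace ℝ (Fin d)) :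
    gaussDensity d σ x ≤ (2 * π * σ ^ 2) ^ (-(d : ℝ) / 2) := by
  unfold gaussDensity
  have h1 : Real.exp (-‖x‖ ^ 2 / (2 * σ ^ 2)) ≤ 1 := by
    rw [Real.exp_le_one_iff]
    have : (0:ℝ) < 2 * σ ^ 2 := by positivity
    exact div_nonpos_of_nonpos_of_nonneg (neg_nonpos.mpr (by positivity)) this.le
  have h2 : (0:ℝ) ≤ (2 * π * σ ^ 2) ^ (-(d : ℝ) / 2) := by positivity
  exact mul_le_of_le_one_right h2 h1

noncomputable def Iphi (d : ℕ) (σ : ℝ) : ℝ≥0∞ := ∫⁻ z, ENNReal.ofReal (gaussDensity d σ z)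

lemma gd_integrable {d : ℕ} {σ : ℝ} (hσ : 0 < σ) : Integrable (gaussDensity d σ) := by
  have hb : (0:ℝ) < (2*σ^2)⁻¹ := by positivity
  have hint : Integrable (fun v : EuclideanSpace ℝ (Fin d) => Real.exp (-(2*σ^2)⁻¹ * ‖v‖^2)) := by
    have h0 := (GaussianFourier.integrable_cexp_neg_mul_sq_norm_add
      (V := EuclideanSpace ℝ (Fin d)) (b := (((2*σ^2)⁻¹ : ℝ) : ℂ)) (by simpa only [Complex.ofReal_re] using hb) 0 0).norm
    refine h0.congr (Filter.Eventually.of_forall fun v => ?_)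
    simp only [Complex.norm_exp]
    congr 1
    simp only [zero_mul, add_zero, neg_mul, Complex.neg_re, ← Complex.ofReal_pow,
      ← Complex.ofReal_mul, Complex.ofReal_re]
  have h2 := hint.const_mul ((2*π*σ^2) ^ (-(d:ℝ)/2))
  refine h2.congr (Filter.Eventually.of_forall fun v => ?_)
  rw [gaussDensity, show -‖v‖^2/(2*σ^2) = -(2*σ^2)⁻¹*‖v‖^2 from by ring]

lemma Iphi_ne_top {d : ℕ} {σ : ℝ} (hσ : 0 < σ) : Iphi d σ ≠ ⊤ := by
  have h := (gd_integrable (d := d) hσ).2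
  rw [HasFiniteIntegral] at h
  have : Iphi d σ = ∫⁻ z, (‖gaussDensity d σ z‖₊ : ℝ≥0∞) := by
    refine lintegral_congr fun z => ?_
    rw [← enorm_eq_nnnorm, Real.enorm_eq_ofReal_abs, abs_of_nonneg (gd_nonneg _ _ _)]
  rw [this]
  exact h.ne

lemma gd_meas_sub {d : ℕ} (σ : ℝ) :
    Measurable (fun p : EuclideanSpace ℝ (Fin d) × EuclideanSpace ℝ (Fin d) =>
      ENNReal.ofReal (gaussDensity d σ (p.1 - p.2))) :=
  ((gd_cont d σ).measurable.comp (measurable_fst.sub measurable_snd)).ennreal_ofReal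

lemma mconv_eq {d : ℕ} (σ : ℝ) (Q : Measure (EuclideanSpace ℝ (Fin d))) [SFinite Q] :
    mconv Q (gaussMeasure d σ) =
      volume.withDensity fun x => ∫⁻ y, ENNReal.ofReal (gaussDensity d σ (x - y)) ∂Q := by
  haveI : SFinite (gaussMeasure d σ) := by rw [gaussMeasure]; infer_instance
  ext A hA
  rw [mconv, Measure.map_apply measurable_add hA, Measure.prod_apply (measurable_add hA),
    withDensity_apply _ hA]
  have h1 : ∀ y : EuclideanSpace ℝ (Fin d),
      (gaussMeasure d σ) (Prod.mk y ⁻¹' ((fun p : EuclideanSpace ℝ (Fin d) ×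
          EuclideanSpace ℝ (Fin d) => p.1 + p.2) ⁻¹' A))
        = ∫⁻ x, A.indicator (fun x => ENNReal.ofReal (gaussDensity d σ (x - y))) x := by
    intro y
    have hset : Prod.mk y ⁻¹' ((fun p : EuclideanSpace ℝ (Fin d) ×
        EuclideanSpace ℝ (Fin d) => p.1 + p.2) ⁻¹' A) = (fun z => y + z) ⁻¹' A := rfl
    rw [hset, gaussMeasure, withDensity_apply _ (hA.preimage (measurable_const_add y)),
      ← lintegral_indicator (hA.preimage (measurable_const_add y)),
      ← lintegral_add_left_eq_self
        (fun x => A.indicator (fun x => ENNReal.ofReal (gaussDensity d σ (x - y))) x) y]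
    refine lintegral_congr fun z => ?_
    by_cases hz : y + z ∈ A
    · rw [Set.indicator_of_mem (show z ∈ (fun z => y + z) ⁻¹' A from hz),
        Set.indicator_of_mem hz, add_sub_cancel_left]
    · rw [Set.indicator_of_notMem (show z ∉ (fun z => y + z) ⁻¹' A from hz),
        Set.indicator_of_notMem hz]
  rw [lintegral_congr h1]
  have hum : Measurable (Function.uncurry fun (y x : EuclideanSpace ℝ (Fin d)) =>
      A.indicator (fun x => ENNReal.ofReal (gaussDensity d σ (x - y))) x) := by
    have he : (Function.uncurry fun (y x : EuclideanSpace ℝ (Fin d)) =>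
        A.indicator (fun x => ENNReal.ofReal (gaussDensity d σ (x - y))) x)
        = Set.indicator ((fun p : EuclideanSpace ℝ (Fin d) × EuclideanSpace ℝ (Fin d) => p.2) ⁻¹' A)
          (fun p => ENNReal.ofReal (gaussDensity d σ (p.2 - p.1))) := by
      ext p
      by_cases hp : p.2 ∈ A
      · simp [Function.uncurry, Set.indicator_of_mem, hp,
          Set.indicator_of_mem (show p ∈ _ ⁻¹' A from hp)]
      · simp [Function.uncurry, Set.indicator_of_notMem, hp,
          Set.indicator_of_notMem (show p ∉ _ ⁻¹' A from hp)]
    rw [he]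
    exact Measurable.indicator
      (((gd_cont d σ).measurable.comp (measurable_snd.sub measurable_fst)).ennreal_ofReal)
      (hA.preimage measurable_snd)
  rw [lintegral_lintegral_swap hum.aemeasurable, ← lintegral_indicator hA]
  refine lintegral_congr fun x => ?_
  by_cases hx : x ∈ A
  · simp only [Set.indicator_of_mem hx]
  · simp only [Set.indicator_of_notMem hx, lintegral_zero]

lemma mass_eq {d : ℕ} {σ : ℝ} (Q : Measure (EuclideanSpace ℝ (Fin d)))
    [IsProbabilityMeasure Q] :
    ∫⁻ x, ∫⁻ y, ENNReal.ofReal (gaussDensity d σ (x - y)) ∂Q = Iphi d σ := by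
  rw [lintegral_lintegral_swap (gd_meas_sub σ).aemeasurable]
  have h1 : ∀ y : EuclideanSpace ℝ (Fin d),
      ∫⁻ x, ENNReal.ofReal (gaussDensity d σ (x - y)) = Iphi d σ := fun y =>
    lintegral_sub_right_eq_self (fun z => ENNReal.ofReal (gaussDensity d σ z)) y
  rw [lintegral_congr h1, lintegral_const, measure_univ, mul_one]

lemma tv_le_half {α : Type*} [MeasurableSpace α] {ρ : Measure α} {F G : α → ℝ≥0∞}
    (hF : Measurable F) (hG : Measurable G) (hm : ∫⁻ a, F a ∂ρ = ∫⁻ a, G a ∂ρ)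
    (hfin : ∫⁻ a, F a ∂ρ ≠ ⊤) :
    ENNReal.ofReal (tvDist (ρ.withDensity F) (ρ.withDensity G))
      ≤ 2⁻¹ * ∫⁻ a, ((F a - G a) + (G a - F a)) ∂ρ := by
  set t := ∫⁻ a, (F a - G a) ∂ρ with ht_def
  have hdec : ∀ a, F a = (F a - G a) + (F a ⊓ G a) := by
    intro a
    rcases le_total (G a) (F a) with h | h
    · rw [inf_eq_right.mpr h, tsub_add_cancel_of_le h]
    · rw [inf_eq_left.mpr h, tsub_eq_zero_of_le h, zero_add]
  have hdec' : ∀ a, G a = (G a - F a) + (F a ⊓ G a) := by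
    intro a
    rcases le_total (F a) (G a) with h | h
    · rw [inf_eq_left.mpr h, tsub_add_cancel_of_le h]
    · rw [inf_eq_right.mpr h, tsub_eq_zero_of_le h, zero_add]
  have hinf_fin : ∫⁻ a, (F a ⊓ G a) ∂ρ ≠ ⊤ :=
    ne_top_of_le_ne_top hfin (lintegral_mono fun a => inf_le_left)
  have h1 : ∫⁻ a, F a ∂ρ = t + ∫⁻ a, (F a ⊓ G a) ∂ρ := by
    conv_lhs => rw [lintegral_congr hdec]
    rw [lintegral_add_left (f := fun a => F a - G a) (hF.sub hG)]
  have h2 : ∫⁻ a, G a ∂ρ = (∫⁻ a, (G a - F a) ∂ρ) + ∫⁻ a, (F a ⊓ G a) ∂ρ := by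
    conv_lhs => rw [lintegral_congr hdec']
    rw [lintegral_add_left (f := fun a => G a - F a) (hG.sub hF)]
  have hteq : ∫⁻ a, (G a - F a) ∂ρ = t := by
    have := (h1.symm.trans (hm.trans h2))
    exact ((ENNReal.add_left_inj hinf_fin).mp this.symm)
  have htne : t ≠ ⊤ := ne_top_of_le_ne_top hfin (lintegral_mono fun x => tsub_le_self)
  have key : ∀ A : {s : Set α // MeasurableSet s},
      |((ρ.withDensity F) A).toReal - ((ρ.withDensity G) A).toReal| ≤ t.toReal := by
    rintro ⟨A, hA⟩
    simp only
    rw [withDensity_apply _ hA, withDensity_apply _ hA]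
    set a := ∫⁻ x in A, F x ∂ρ with ha_def
    set b := ∫⁻ x in A, G x ∂ρ with hb_def
    have ha : a ≠ ⊤ := ne_top_of_le_ne_top hfin (setLIntegral_le_lintegral _ _)
    have hb : b ≠ ⊤ := ne_top_of_le_ne_top (hm ▸ hfin) (setLIntegral_le_lintegral _ _)
    have h1' : a ≤ b + t := by
      calc a ≤ ∫⁻ x in A, ((F x - G x) + G x) ∂ρ :=
            lintegral_mono fun x => le_tsub_add
        _ = (∫⁻ x in A, (F x - G x) ∂ρ) + b := lintegral_add_left (hF.sub hG) _
        _ ≤ t + b := add_le_add_left (setLIntegral_le_lintegral _ _) _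
        _ = b + t := add_comm _ _
    have h2' : b ≤ a + t := by
      calc b ≤ ∫⁻ x in A, ((G x - F x) + F x) ∂ρ :=
            lintegral_mono fun x => le_tsub_add
        _ = (∫⁻ x in A, (G x - F x) ∂ρ) + a := lintegral_add_left (hG.sub hF) _
        _ ≤ (∫⁻ x, (G x - F x) ∂ρ) + a := add_le_add_left (setLIntegral_le_lintegral _ _) _
        _ = a + t := by rw [hteq, add_comm]
    rw [abs_sub_le_iff]
    constructor
    · have h3 := ENNReal.toReal_mono (by simp [ENNReal.add_ne_top, hb, htne]) h1'
      rw [ENNReal.toReal_add hb htne] at h3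
      linarith
    · have h3 := ENNReal.toReal_mono (by simp [ENNReal.add_ne_top, ha, htne]) h2'
      rw [ENNReal.toReal_add ha htne] at h3
      linarith
  have htv : tvDist (ρ.withDensity F) (ρ.withDensity G) ≤ t.toReal := ciSup_le key
  calc ENNReal.ofReal (tvDist (ρ.withDensity F) (ρ.withDensity G))
      ≤ ENNReal.ofReal t.toReal := ENNReal.ofReal_le_ofReal htv
    _ = t := ENNReal.ofReal_toReal htne
    _ = 2⁻¹ * ∫⁻ a, ((F a - G a) + (G a - F a)) ∂ρ := by
        rw [lintegral_add_left (f := fun a => F a - G a) (hF.sub hG), hteq, ← two_mul, ← mul_assoc,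
          ENNReal.inv_mul_cancel two_ne_zero ENNReal.ofNat_ne_top, one_mul]

lemma ofReal_sub_add_sub_le {a b : ℝ} (ha : 0 ≤ a) (hb : 0 ≤ b) :
    (ENNReal.ofReal a - ENNReal.ofReal b) + (ENNReal.ofReal b - ENNReal.ofReal a)
      ≤ ENNReal.ofReal |a - b| := by
  rcases le_total a b with h | h
  · rw [tsub_eq_zero_of_le (ENNReal.ofReal_le_ofReal h), zero_add, ← ENNReal.ofReal_sub _ ha,
      abs_sub_comm, abs_of_nonneg (sub_nonneg.mpr h)]
  · rw [tsub_eq_zero_of_le (ENNReal.ofReal_le_ofReal h), add_zero, ← ENNReal.ofReal_sub _ hb,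
      abs_of_nonneg (sub_nonneg.mpr h)]

lemma key_prob {Ω : Type*} [MeasurableSpace Ω] {μ : Measure Ω} [IsProbabilityMeasure μ]
    {E : Type*} [MeasurableSpace E] {P : Measure E} [IsProbabilityMeasure P]
    {X : ℕ → Ω → E} (hmeas : ∀ i, Measurable (X i))
    (hindep : iIndepFun X μ)
    (hlaw : ∀ i, μ.map (X i) = P)
    {φ : E → ℝ} (hφm : Measurable φ) {C : ℝ} (hφb : ∀ y, φ y ∈ Set.Icc 0 C)
    {n : ℕ} (hn : 1 ≤ n) :
    ∫⁻ ω, ENNReal.ofReal |(n:ℝ)⁻¹ * ∑ i ∈ Finset.range n, φ (X i ω) - ∫ y, φ y ∂P| ∂μ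
      ≤ ENNReal.ofReal (Real.sqrt (variance φ P) * (Real.sqrt n)⁻¹) := by
  have hnR : (0:ℝ) < n := by exact_mod_cast hn
  set Z : ℕ → Ω → ℝ := fun i ω => φ (X i ω) with hZ
  have hZm : ∀ i, Measurable (Z i) := fun i => hφm.comp (hmeas i)
  have hZ2 : ∀ i, MemLp (Z i) 2 μ := fun i =>
    memLp_of_bounded (Filter.Eventually.of_forall fun ω => hφb _)
      ((hZm i).aestronglyMeasurable) 2
  have hφ2 : MemLp φ 2 P :=
    memLp_of_bounded (Filter.Eventually.of_forall hφb) hφm.aestronglyMeasurable 2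
  have hmean : ∀ i, μ[Z i] = ∫ y, φ y ∂P := fun i => by
    rw [← hlaw i, integral_map (hmeas i).aemeasurable hφm.aestronglyMeasurable]
  have hsq : ∀ i, μ[(Z i) ^ 2] = ∫ y, (φ ^ 2) y ∂P := fun i => by
    simp only [Pi.pow_apply]
    rw [← hlaw i, integral_map (hmeas i).aemeasurable
      ((hφm.pow_const 2).aestronglyMeasurable)]
  have hvar : ∀ i, variance (Z i) μ = variance φ P := fun i => by
    rw [variance_eq_sub (hZ2 i), variance_eq_sub hφ2, hmean i, hsq i]
  set S : Ω → ℝ := fun ω => (n:ℝ)⁻¹ * ∑ i ∈ Finset.range n, Z i ω with hS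
  have hSeq : S = (n:ℝ)⁻¹ • ∑ i ∈ Finset.range n, Z i := by
    funext ω; simp [hS, Finset.sum_apply]
  have hSsum2 : MemLp (∑ i ∈ Finset.range n, Z i) 2 μ :=
    memLp_finset_sum' _ fun i _ => hZ2 i
  have hS2 : MemLp S 2 μ := by rw [hSeq]; exact hSsum2.const_smul _
  have hpair : Set.Pairwise ↑(Finset.range n) (fun i j => IndepFun (Z i) (Z j) μ) :=
    fun i _ j _ hij => (hindep.indepFun hij).comp hφm hφm
  have hvarS : variance S μ = variance φ P / n := by
    rw [hSeq, variance_smul, IndepFun.variance_sum (fun i _ => hZ2 i) hpair]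
    simp only [hvar]
    rw [Finset.sum_const, Finset.card_range, nsmul_eq_mul]
    field_simp
  have hmeanS : μ[S] = ∫ y, φ y ∂P := by
    rw [hSeq]
    simp only [Pi.smul_apply, Finset.sum_apply, smul_eq_mul]
    rw [MeasureTheory.integral_const_mul, integral_finset_sum _ (fun i _ => (hZ2 i).integrable one_le_two)]
    simp only [hmean]
    rw [Finset.sum_const, Finset.card_range, nsmul_eq_mul]
    field_simp
  calc ∫⁻ ω, ENNReal.ofReal |(n:ℝ)⁻¹ * ∑ i ∈ Finset.range n, φ (X i ω) - ∫ y, φ y ∂P| ∂μ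
      = ∫⁻ ω, (‖S ω - μ[S]‖₊ : ℝ≥0∞) ∂μ := by
        refine lintegral_congr fun ω => ?_
        rw [hmeanS, ← enorm_eq_nnnorm, Real.enorm_eq_ofReal_abs]
    _ = eLpNorm (fun ω => S ω - μ[S]) 1 μ := (eLpNorm_one_eq_lintegral_enorm.trans
          (lintegral_congr fun ω => enorm_eq_nnnorm _)).symm
    _ ≤ eLpNorm (fun ω => S ω - μ[S]) 2 μ :=
        eLpNorm_le_eLpNorm_of_exponent_le one_le_two
          (hS2.aestronglyMeasurable.sub aestronglyMeasurable_const)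
    _ = evariance S μ ^ (1/2 : ℝ) := by
        rw [eLpNorm_eq_lintegral_rpow_enorm_toReal two_ne_zero ENNReal.ofNat_ne_top, evariance]
        simp only [ENNReal.toReal_ofNat, one_div]
        congr 1
        refine lintegral_congr fun ω => ?_
        rw [← ENNReal.rpow_two]
    _ = ENNReal.ofReal (Real.sqrt (variance S μ)) := by
        rw [← hS2.ofReal_variance_eq,
          ENNReal.ofReal_rpow_of_nonneg (variance_nonneg _ _) (by norm_num),
          ← Real.sqrt_eq_rpow]
    _ ≤ ENNReal.ofReal (Real.sqrt (variance φ P) * (Real.sqrt n)⁻¹) := by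
        rw [hvarS, Real.sqrt_div (variance_nonneg _ _), div_eq_mul_inv]

/-- **Moment bound for the smooth total variation distance.**
If `∫ √(Var_P(φ_σ(x−·))) dx < ∞`, then
`E[δ_TV(P_n ∗ N_σ, P ∗ N_σ)] ≤ (1/(2√n)) ∫ √(Var_P(φ_σ(x−·))) dx`. -/
theorem smooth_tv_moment_bound
    {Ω : Type*} [MeasurableSpace Ω] (μ : Measure Ω) [IsProbabilityMeasure μ]
    (d : ℕ) (hd : 1 ≤ d) (σ : ℝ) (hσ : 0 < σ)
    (P : Measure (EuclideanSpace ℝ (Fin d))) [IsProbabilityMeasure P]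
    (hP : ∫⁻ x, ENNReal.ofReal
        (Real.sqrt (variance (fun y => gaussDensity d σ (x - y)) P)) < ⊤)
    (X : ℕ → Ω → EuclideanSpace ℝ (Fin d))
    (hmeas : ∀ i, Measurable (X i))
    (hindep : iIndepFun X μ)
    (hlaw : ∀ i, μ.map (X i) = P)
    (n : ℕ) (hn : 1 ≤ n) :
    ∫⁻ ω, ENNReal.ofReal (tvDist (mconv (empMeasure X n ω) (gaussMeasure d σ))
        (mconv P (gaussMeasure d σ))) ∂μ
      ≤ ENNReal.ofReal (1 / (2 * Real.sqrt n)) *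
        ∫⁻ x, ENNReal.ofReal
          (Real.sqrt (variance (fun y => gaussDensity d σ (x - y)) P)) := by
  have hnR : (0:ℝ) < n := by exact_mod_cast hn
  have hnne : (n:ℝ) ≠ 0 := hnR.ne'
  have hgdm : Measurable (gaussDensity d σ) := (gd_cont d σ).measurable
  -- empirical measure is a probability measure
  have hemp : ∀ ω, IsProbabilityMeasure (empMeasure X n ω) := by
    intro ω
    constructor
    rw [empMeasure, Measure.smul_apply, Measure.finset_sum_apply]
    simp only [Measure.dirac_apply_of_mem (Set.mem_univ _), Finset.sum_const,
      Finset.card_range, nsmul_eq_mul, mul_one, smul_eq_mul]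
    rw [ENNReal.inv_mul_cancel (by exact_mod_cast hnne) (ENNReal.natCast_ne_top n)]
  -- strong measurability of fP
  have hfPm : StronglyMeasurable (fun x => ∫ y, gaussDensity d σ (x - y) ∂P) := by
    have hgdsm : StronglyMeasurable (fun p : EuclideanSpace ℝ (Fin d) ×
        EuclideanSpace ℝ (Fin d) => gaussDensity d σ (p.1 - p.2)) :=
      ((gd_cont d σ).comp (continuous_fst.sub continuous_snd)).stronglyMeasurable
    exact hgdsm.integral_prod_right'
  have hfPnn : ∀ x, 0 ≤ ∫ y, gaussDensity d σ (x - y) ∂P := fun x =>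
    integral_nonneg fun y => gd_nonneg _ _ _
  have hfnnn : ∀ (ω) (x : EuclideanSpace ℝ (Fin d)),
      0 ≤ (n:ℝ)⁻¹ * ∑ i ∈ Finset.range n, gaussDensity d σ (x - X i ω) := fun ω x =>
    mul_nonneg (by positivity) (Finset.sum_nonneg fun i _ => gd_nonneg _ _ _)
  -- pointwise (in ω) total variation bound
  have hω : ∀ ω, ENNReal.ofReal (tvDist (mconv (empMeasure X n ω) (gaussMeasure d σ))
        (mconv P (gaussMeasure d σ)))
      ≤ 2⁻¹ * ∫⁻ x, ENNReal.ofReal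
          |(n:ℝ)⁻¹ * ∑ i ∈ Finset.range n, gaussDensity d σ (x - X i ω)
            - ∫ y, gaussDensity d σ (x - y) ∂P| := by
    intro ω
    haveI := hemp ω
    rw [mconv_eq σ (empMeasure X n ω), mconv_eq σ P]
    have hFeq : (fun x => ∫⁻ y, ENNReal.ofReal (gaussDensity d σ (x - y)) ∂(empMeasure X n ω))
        = fun x => ENNReal.ofReal
            ((n:ℝ)⁻¹ * ∑ i ∈ Finset.range n, gaussDensity d σ (x - X i ω)) := by
      funext x
      rw [empMeasure, lintegral_smul_measure, lintegral_finset_sum_measure]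
      have hd1 : ∀ i ∈ Finset.range n,
          ∫⁻ y, ENNReal.ofReal (gaussDensity d σ (x - y)) ∂(Measure.dirac (X i ω))
            = ENNReal.ofReal (gaussDensity d σ (x - X i ω)) := fun i _ =>
        lintegral_dirac _ _
      rw [Finset.sum_congr rfl hd1, ENNReal.ofReal_mul (by positivity),
        ENNReal.ofReal_sum_of_nonneg (fun i _ => gd_nonneg _ _ _),
        ENNReal.ofReal_inv_of_pos hnR, ENNReal.ofReal_natCast, smul_eq_mul]
    have hGeq : (fun x => ∫⁻ y, ENNReal.ofReal (gaussDensity d σ (x - y)) ∂P)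
        = fun x => ENNReal.ofReal (∫ y, gaussDensity d σ (x - y) ∂P) := by
      funext x
      have hint : Integrable (fun y => gaussDensity d σ (x - y)) P := by
        have hm1 : MemLp (fun y => gaussDensity d σ (x - y)) 1 P :=
          memLp_of_bounded (Filter.Eventually.of_forall fun y =>
            Set.mem_Icc.mpr ⟨gd_nonneg _ _ _, gd_le hσ _⟩)
            ((hgdm.comp (measurable_const.sub measurable_id)).aestronglyMeasurable) 1
        exact hm1.integrable le_rfl
      rw [← ofReal_integral_eq_lintegral_ofReal hint
        (Filter.Eventually.of_forall fun y => gd_nonneg _ _ _)]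
    have hmF : ∫⁻ x, ENNReal.ofReal
        ((n:ℝ)⁻¹ * ∑ i ∈ Finset.range n, gaussDensity d σ (x - X i ω)) = Iphi d σ := by
      rw [← hFeq]; exact mass_eq (empMeasure X n ω)
    have hmG : ∫⁻ x, ENNReal.ofReal (∫ y, gaussDensity d σ (x - y) ∂P) = Iphi d σ := by
      rw [← hGeq]; exact mass_eq P
    rw [hFeq, hGeq]
    have hFm : Measurable (fun x => ENNReal.ofReal
        ((n:ℝ)⁻¹ * ∑ i ∈ Finset.range n, gaussDensity d σ (x - X i ω))) := by
      refine Measurable.ennreal_ofReal ?_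
      exact (Finset.measurable_sum _ fun i _ =>
        hgdm.comp (measurable_id.sub measurable_const)).const_mul _
    have hGm : Measurable (fun x => ENNReal.ofReal (∫ y, gaussDensity d σ (x - y) ∂P)) :=
      hfPm.measurable.ennreal_ofReal
    refine le_trans (tv_le_half hFm hGm (hmF.trans hmG.symm) (hmF ▸ Iphi_ne_top hσ)) ?_
    exact mul_le_mul_right (lintegral_mono fun x =>
      ofReal_sub_add_sub_le (hfnnn ω x) (hfPnn x)) _
  -- joint measurability
  have hjm : Measurable (Function.uncurry fun (ω : Ω) (x : EuclideanSpace ℝ (Fin d)) =>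
      ENNReal.ofReal |(n:ℝ)⁻¹ * ∑ i ∈ Finset.range n, gaussDensity d σ (x - X i ω)
        - ∫ y, gaussDensity d σ (x - y) ∂P|) := by
    refine Measurable.ennreal_ofReal (Measurable.abs (Measurable.sub ?_ ?_))
    · exact (Finset.measurable_sum _ fun i _ =>
        hgdm.comp (measurable_snd.sub ((hmeas i).comp measurable_fst))).const_mul _
    · exact hfPm.measurable.comp measurable_snd
  calc ∫⁻ ω, ENNReal.ofReal (tvDist (mconv (empMeasure X n ω) (gaussMeasure d σ))
        (mconv P (gaussMeasure d σ))) ∂μ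
      ≤ ∫⁻ ω, 2⁻¹ * (∫⁻ x, ENNReal.ofReal
          |(n:ℝ)⁻¹ * ∑ i ∈ Finset.range n, gaussDensity d σ (x - X i ω)
            - ∫ y, gaussDensity d σ (x - y) ∂P|) ∂μ := lintegral_mono hω
    _ = 2⁻¹ * ∫⁻ ω, (∫⁻ x, ENNReal.ofReal
          |(n:ℝ)⁻¹ * ∑ i ∈ Finset.range n, gaussDensity d σ (x - X i ω)
            - ∫ y, gaussDensity d σ (x - y) ∂P|) ∂μ :=
        lintegral_const_mul' _ _ (by simp)
    _ = 2⁻¹ * ∫⁻ x, (∫⁻ ω, ENNReal.ofReal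
          |(n:ℝ)⁻¹ * ∑ i ∈ Finset.range n, gaussDensity d σ (x - X i ω)
            - ∫ y, gaussDensity d σ (x - y) ∂P| ∂μ) := by
        rw [lintegral_lintegral_swap hjm.aemeasurable]
    _ ≤ 2⁻¹ * ∫⁻ x, ENNReal.ofReal
          (Real.sqrt (variance (fun y => gaussDensity d σ (x - y)) P) * (Real.sqrt n)⁻¹) := by
        refine mul_le_mul_right (lintegral_mono fun x => ?_) _
        exact key_prob hmeas hindep hlaw
          (hgdm.comp (measurable_const.sub measurable_id))
          (fun y => Set.mem_Icc.mpr ⟨gd_nonneg _ _ _, gd_le hσ _⟩) hn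
    _ = ENNReal.ofReal (1 / (2 * Real.sqrt n)) *
        ∫⁻ x, ENNReal.ofReal
          (Real.sqrt (variance (fun y => gaussDensity d σ (x - y)) P)) := by
        have h2 : ENNReal.ofReal (1 / (2 * Real.sqrt n))
            = 2⁻¹ * ENNReal.ofReal ((Real.sqrt n)⁻¹) := by
          rw [one_div, mul_inv, ENNReal.ofReal_mul (by positivity),
            ENNReal.ofReal_inv_of_pos two_pos, ENNReal.ofReal_ofNat]
        simp_rw [ENNReal.ofReal_mul (Real.sqrt_nonneg _)]
        rw [lintegral_mul_const' _ _ ENNReal.ofReal_ne_top, h2]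
        ring
end

section
/- Let d ≥ 1, σ > 0, and let P be a Borel probability measure on ℝ^d with X ~ P. Then ∫_{ℝ^d} √(Var_P(φ_σ(x−·))) dx ≤ 8^{d/2} + (2^{d/2+1}/(σ^d Γ(d/2))) ∫_0^∞ t^{d−1} √(P(‖X‖ > t)) dt. -/
open MeasureTheory ProbabilityTheory Real Filter
open scoped ENNReal NNReal

section Helpers

open Set Function Metric Module

local notation "dim" => Module.finrank ℝ

lemma lintegral_fun_norm_addHaar' {E : Type*} [NormedAddCommGroup E] [NormedSpace ℝ E]
    [MeasurableSpace E] [Nontrivial E] (μ : Measure E) [FiniteDimensional ℝ E] [BorelSpace E]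
    [μ.IsAddHaarMeasure] (g : ℝ → ℝ≥0∞) (hg : Measurable g) :
    ∫⁻ x, g ‖x‖ ∂μ = (dim E : ℝ≥0∞) * μ (ball 0 1) *
      ∫⁻ y in Ioi (0 : ℝ), ENNReal.ofReal (y ^ (dim E - 1)) * g y := by
  have hgm : Measurable fun p : sphere (0 : E) 1 × Ioi (0 : ℝ) => g p.2 :=
    hg.comp (measurable_subtype_coe.comp measurable_snd)
  calc
    ∫⁻ x, g ‖x‖ ∂μ = ∫⁻ x in ({(0 : E)}ᶜ), g ‖x‖ ∂μ := by
      rw [MeasureTheory.restrict_compl_singleton]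
    _ = ∫⁻ x : ({(0 : E)}ᶜ : Set E), g ‖x.1‖ ∂(μ.comap (↑)) :=
      (lintegral_subtype_comap (measurableSet_singleton _).compl _).symm
    _ = ∫⁻ p : sphere (0 : E) 1 × Ioi (0 : ℝ), g p.2
          ∂(μ.toSphere.prod (.volumeIoiPow (dim E - 1))) := by
      rw [← μ.measurePreserving_homeomorphUnitSphereProd.lintegral_comp hgm]
      refine lintegral_congr fun x => ?_
      simp
    _ = μ.toSphere univ * ∫⁻ r : Ioi (0 : ℝ), g r ∂(.volumeIoiPow (dim E - 1)) := by
      rw [lintegral_prod _ hgm.aemeasurable]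
      simp [lintegral_const, mul_comm]
    _ = (dim E : ℝ≥0∞) * μ (ball 0 1) *
          ∫⁻ y in Ioi (0 : ℝ), ENNReal.ofReal (y ^ (dim E - 1)) * g y := by
      rw [Measure.toSphere_apply_univ, Measure.volumeIoiPow]
      congr 1
      rw [lintegral_withDensity_eq_lintegral_mul _
          (by exact ((measurable_subtype_coe).pow_const _).ennreal_ofReal :
            Measurable fun r : Ioi (0:ℝ) => ENNReal.ofReal (r.1 ^ (dim E - 1)))
          (show Measurable fun r : Ioi (0:ℝ) => g r.1 from hg.comp measurable_subtype_coe)]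
      exact lintegral_subtype_comap measurableSet_Ioi
        (fun y => ENNReal.ofReal (y ^ (dim E - 1)) * g y)

lemma lintegral_Ioi_scale (F : ℝ → ℝ≥0∞) (hF : Measurable F) :
    ∫⁻ y in Ioi (0:ℝ), F y = 2 * ∫⁻ t in Ioi (0:ℝ), F (2*t) := by
  have hmap : Measure.map (fun t : ℝ => 2*t) volume = ENNReal.ofReal |2⁻¹| • volume :=
    Real.map_volume_mul_left (by norm_num)
  have hind : ∀ (H : ℝ → ℝ≥0∞), ∫⁻ a, (Ioi (0:ℝ)).indicator H a = ∫⁻ a in Ioi (0:ℝ), H a :=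
    fun H => lintegral_indicator measurableSet_Ioi H
  rw [← hind F]
  have hmeas : Measurable ((Ioi (0:ℝ)).indicator F) := hF.indicator measurableSet_Ioi
  have c1 : (2:ℝ≥0∞) * ENNReal.ofReal |2⁻¹| = 1 := by
    rw [abs_of_pos (by norm_num : (0:ℝ) < 2⁻¹), ENNReal.ofReal_inv_of_pos (by norm_num)]
    rw [show ENNReal.ofReal 2 = 2 by norm_num]
    exact ENNReal.mul_inv_cancel (by norm_num) (by norm_num)
  have key : ∫⁻ a, (Ioi (0:ℝ)).indicator F a ∂volume
      = 2 * ∫⁻ t, (Ioi (0:ℝ)).indicator F (2*t) ∂volume := by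
    calc ∫⁻ a, (Ioi (0:ℝ)).indicator F a ∂volume
        = 1 * ∫⁻ a, (Ioi (0:ℝ)).indicator F a ∂volume := (one_mul _).symm
      _ = 2 * (ENNReal.ofReal |2⁻¹| * ∫⁻ a, (Ioi (0:ℝ)).indicator F a ∂volume) := by
          rw [← c1, mul_assoc]
      _ = 2 * ∫⁻ a, (Ioi (0:ℝ)).indicator F a ∂(ENNReal.ofReal |2⁻¹| • volume) := by
          rw [lintegral_smul_measure, smul_eq_mul]
      _ = 2 * ∫⁻ a, (Ioi (0:ℝ)).indicator F a ∂(Measure.map (fun t : ℝ => 2*t) volume) := by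
          rw [hmap]
      _ = 2 * ∫⁻ t, (Ioi (0:ℝ)).indicator F (2*t) ∂volume := by
          rw [lintegral_map hmeas (measurable_const_mul 2)]
  rw [key]
  congr 1
  rw [← hind (fun t => F (2*t))]
  refine lintegral_congr fun t => ?_
  by_cases h : 0 < t
  · simp [Set.indicator_of_mem, h, mul_pos (by norm_num : (0:ℝ)<2) h, Set.mem_Ioi]
  · have h2 : ¬ (0 < 2*t) := by intro hh; exact h (by linarith)
    simp [Set.indicator_of_notMem, h, h2, Set.mem_Ioi]

lemma integrable_rexp_neg_mul_sq_norm' {V : Type*} [NormedAddCommGroup V]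
    [InnerProductSpace ℝ V] [FiniteDimensional ℝ V] [MeasurableSpace V] [BorelSpace V]
    {b : ℝ} (hb : 0 < b) :
    Integrable (fun v : V => rexp (-b * ‖v‖^2)) := by
  have h := (GaussianFourier.integrable_cexp_neg_mul_sq_norm_add (V := V)
    (b := (b:ℂ)) (by simpa using hb) 0 0).norm
  refine h.congr (Eventually.of_forall fun v => ?_)
  simp [Complex.norm_exp, ← Complex.ofReal_pow]

lemma sqrt_add_le' {a b : ℝ} (ha : 0 ≤ a) (hb : 0 ≤ b) :
    Real.sqrt (a + b) ≤ Real.sqrt a + Real.sqrt b := by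
  have hkey : a + b ≤ (Real.sqrt a + Real.sqrt b) ^ 2 := by
    nlinarith [Real.sq_sqrt ha, Real.sq_sqrt hb, mul_nonneg (Real.sqrt_nonneg a) (Real.sqrt_nonneg b)]
  calc Real.sqrt (a + b) ≤ Real.sqrt ((Real.sqrt a + Real.sqrt b) ^ 2) := Real.sqrt_le_sqrt hkey
    _ = Real.sqrt a + Real.sqrt b := Real.sqrt_sq (by positivity)

lemma sqrt_exp' (t : ℝ) : Real.sqrt (Real.exp t) = Real.exp (t / 2) := by
  rw [show Real.exp t = Real.exp (t / 2) ^ 2 by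
    rw [sq, ← Real.exp_add]; ring_nf]
  exact Real.sqrt_sq (Real.exp_nonneg _)

lemma ptwise_bound (d : ℕ) (σ : ℝ) (hσ : 0 < σ)
    (P : Measure (EuclideanSpace ℝ (Fin d))) [IsProbabilityMeasure P]
    (x : EuclideanSpace ℝ (Fin d)) :
    Real.sqrt (variance (fun y => gaussDensity d σ (x - y)) P) ≤
      (2 * π * σ ^ 2) ^ (-(d : ℝ) / 2) * Real.exp (-(1/(8*σ^2)) * ‖x‖ ^ 2) +
      (2 * π * σ ^ 2) ^ (-(d : ℝ) / 2) *
        Real.sqrt ((P {y | ‖y‖ > ‖x‖/2}).toReal) := by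
  set c : ℝ := (2 * π * σ ^ 2) ^ (-(d : ℝ) / 2) with hc_def
  have hc : 0 < c := Real.rpow_pos_of_pos (by positivity) _
  set f : EuclideanSpace ℝ (Fin d) → ℝ := fun y => gaussDensity d σ (x - y) with hf_def
  have hfc : Continuous f := by
    unfold f
    unfold gaussDensity
    fun_prop
  have hsq : ∀ y, f y ^ 2 = c ^ 2 * Real.exp (-‖x - y‖ ^ 2 / σ ^ 2) := by
    intro y
    unfold f c
    unfold gaussDensity
    rw [mul_pow, sq (Real.exp _), ← Real.exp_add]
    congr 2
    field_simp
    ring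
  have hfb : ∀ y, f y ^ 2 ≤ c ^ 2 := by
    intro y
    rw [hsq y]
    calc c ^ 2 * Real.exp (-‖x - y‖ ^ 2 / σ ^ 2) ≤ c ^ 2 * 1 := by
          refine mul_le_mul_of_nonneg_left ?_ (sq_nonneg c)
          rw [Real.exp_le_one_iff]
          exact div_nonpos_of_nonpos_of_nonneg (neg_nonpos.2 (sq_nonneg _)) (sq_nonneg σ)
      _ = c ^ 2 := mul_one _
  have hint : Integrable (fun y => f y ^ 2) P := by
    refine (integrable_const (c ^ 2)).mono' ((hfc.pow 2).aestronglyMeasurable) ?_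
    exact Filter.Eventually.of_forall fun y => by
      rw [Real.norm_eq_abs, abs_of_nonneg (sq_nonneg _)]; exact hfb y
  have h1 : variance f P ≤ ∫ y, f y ^ 2 ∂P := by
    have := variance_le_expectation_sq (μ := P) (X := f) hfc.aestronglyMeasurable
    simpa using this
  set S : Set (EuclideanSpace ℝ (Fin d)) := {y | ‖y‖ > ‖x‖/2} with hS_def
  have hSm : MeasurableSet S := measurableSet_lt measurable_const measurable_norm
  have h2 : ∫ y, f y ^ 2 ∂P ≤
      c ^ 2 * Real.exp (-‖x‖ ^ 2 / (4 * σ ^ 2)) + c ^ 2 * (P S).toReal := by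
    rw [← integral_add_compl hSm hint]
    have hA : ∫ y in S, f y ^ 2 ∂P ≤ c ^ 2 * (P S).toReal := by
      calc ∫ y in S, f y ^ 2 ∂P ≤ ∫ _ in S, c ^ 2 ∂P :=
            setIntegral_mono_on hint.integrableOn
              (integrableOn_const (measure_lt_top P S).ne) hSm fun y _ => hfb y
        _ = c ^ 2 * (P S).toReal := by rw [setIntegral_const, smul_eq_mul, mul_comm]; rfl
    have hB : ∫ y in Sᶜ, f y ^ 2 ∂P ≤ c ^ 2 * Real.exp (-‖x‖ ^ 2 / (4 * σ ^ 2)) := by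
      have hptB : ∀ y ∈ Sᶜ, f y ^ 2 ≤ c ^ 2 * Real.exp (-‖x‖ ^ 2 / (4 * σ ^ 2)) := by
        intro y hy
        rw [hsq y]
        refine mul_le_mul_of_nonneg_left ?_ (sq_nonneg c)
        rw [Real.exp_le_exp]
        have hy' : ‖y‖ ≤ ‖x‖ / 2 := not_lt.1 hy
        have hxy : ‖x‖ / 2 ≤ ‖x - y‖ := by
          have := norm_sub_norm_le x y
          linarith
        have hsq2 : ‖x‖ ^ 2 / 4 ≤ ‖x - y‖ ^ 2 := by
          nlinarith [norm_nonneg x, norm_nonneg (x - y)]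
        rw [div_le_div_iff₀ (by positivity) (by positivity)]
        nlinarith [sq_nonneg σ, hσ.le, mul_pos hσ hσ]
      calc ∫ y in Sᶜ, f y ^ 2 ∂P ≤ ∫ _ in Sᶜ, c ^ 2 * Real.exp (-‖x‖ ^ 2 / (4 * σ ^ 2)) ∂P :=
            setIntegral_mono_on hint.integrableOn
              (integrableOn_const (measure_lt_top P Sᶜ).ne) hSm.compl hptB
        _ = (P Sᶜ).toReal * (c ^ 2 * Real.exp (-‖x‖ ^ 2 / (4 * σ ^ 2))) := by
            rw [setIntegral_const, smul_eq_mul]; rfl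
        _ ≤ 1 * (c ^ 2 * Real.exp (-‖x‖ ^ 2 / (4 * σ ^ 2))) := by
            refine mul_le_mul_of_nonneg_right ?_ (by positivity)
            simpa using ENNReal.toReal_mono ENNReal.one_ne_top prob_le_one
        _ = c ^ 2 * Real.exp (-‖x‖ ^ 2 / (4 * σ ^ 2)) := one_mul _
    linarith
  have h3 : variance f P ≤
      c ^ 2 * Real.exp (-‖x‖ ^ 2 / (4 * σ ^ 2)) + c ^ 2 * (P S).toReal := le_trans h1 h2
  calc Real.sqrt (variance f P)
      ≤ Real.sqrt (c ^ 2 * Real.exp (-‖x‖ ^ 2 / (4 * σ ^ 2)) + c ^ 2 * (P S).toReal) :=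
        Real.sqrt_le_sqrt h3
    _ ≤ Real.sqrt (c ^ 2 * Real.exp (-‖x‖ ^ 2 / (4 * σ ^ 2))) +
        Real.sqrt (c ^ 2 * (P S).toReal) :=
        sqrt_add_le' (by positivity) (by positivity)
    _ = c * Real.exp (-(1/(8*σ^2)) * ‖x‖ ^ 2) + c * Real.sqrt ((P S).toReal) := by
        have harg : -‖x‖ ^ 2 / (4 * σ ^ 2) / 2 = -(1/(8*σ^2)) * ‖x‖ ^ 2 := by
          field_simp
          ring
        rw [Real.sqrt_mul (sq_nonneg c), Real.sqrt_mul (sq_nonneg c),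
          Real.sqrt_sq hc.le, sqrt_exp', harg]

lemma const_real_eq (d : ℕ) (hd : 1 ≤ d) (σ : ℝ) (hσ : 0 < σ) :
    (d:ℝ) * (Real.sqrt π ^ d / Real.Gamma ((d:ℝ)/2 + 1)) * 2 *
      ((2:ℝ)^(d-1) * (2*π*σ^2) ^ (-(d:ℝ)/2))
    = 2 ^ ((d:ℝ)/2 + 1) / (σ^d * Real.Gamma ((d:ℝ)/2)) := by
  have hd0 : (0:ℝ) < (d:ℝ) := by exact_mod_cast Nat.pos_of_ne_zero (by omega)
  have he : (0:ℝ) < (d:ℝ)/2 := by positivity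
  have hΓpos : 0 < Real.Gamma ((d:ℝ)/2) := Real.Gamma_pos_of_pos he
  have hΓ1 : Real.Gamma ((d:ℝ)/2 + 1) = ((d:ℝ)/2) * Real.Gamma ((d:ℝ)/2) :=
    Real.Gamma_add_one he.ne'
  have hπe : Real.sqrt π ^ d = π ^ ((d:ℝ)/2) := by
    rw [Real.sqrt_eq_rpow, ← Real.rpow_natCast (π ^ ((1:ℝ)/2)) d, ← Real.rpow_mul pi_pos.le]
    congr 1
    ring
  have h2σ : (2*π*σ^2) ^ ((d:ℝ)/2)
      = 2 ^ ((d:ℝ)/2) * π ^ ((d:ℝ)/2) * σ^d := by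
    rw [Real.mul_rpow (by positivity) (by positivity),
      Real.mul_rpow (by positivity) (by positivity)]
    congr 1
    rw [show (σ^2 : ℝ) = σ ^ ((2:ℕ):ℝ) from (Real.rpow_natCast σ 2).symm,
      ← Real.rpow_mul hσ.le, ← Real.rpow_natCast σ d]
    congr 1
    push_cast
    ring
  have hcc : (2*π*σ^2) ^ (-(d:ℝ)/2) = ((2*π*σ^2) ^ ((d:ℝ)/2))⁻¹ := by
    rw [show -(d:ℝ)/2 = -((d:ℝ)/2) by ring, Real.rpow_neg (by positivity)]
  have h2d : (2:ℝ)^(d-1) = 2 ^ ((d:ℝ)/2) * 2 ^ ((d:ℝ)/2) / 2 := by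
    rw [← Real.rpow_add (by norm_num), show (d:ℝ)/2 + (d:ℝ)/2 = ((d:ℕ):ℝ) by push_cast; ring,
      Real.rpow_natCast]
    rw [eq_div_iff (by norm_num : (2:ℝ) ≠ 0), ← pow_succ, Nat.sub_add_cancel hd]
  have h2e1 : (2:ℝ) ^ ((d:ℝ)/2 + 1) = 2 ^ ((d:ℝ)/2) * 2 := by
    rw [Real.rpow_add (by norm_num), Real.rpow_one]
  have h2pos : (0:ℝ) < 2 ^ ((d:ℝ)/2) := Real.rpow_pos_of_pos (by norm_num) _
  have hπpos : (0:ℝ) < π ^ ((d:ℝ)/2) := Real.rpow_pos_of_pos pi_pos _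
  have hσd : (0:ℝ) < σ^d := by positivity
  rw [hπe, hΓ1, hcc, h2σ, h2d, h2e1]
  field_simp

end Helpers

/-- **Explicit bound on the integral of the standard deviation of the smoothed density:**
`∫ √(Var_P(φ_σ(x−·))) dx ≤ 8^{d/2} + (2^{d/2+1}/(σ^d Γ(d/2))) ∫₀^∞ t^{d−1} √(P(‖X‖>t)) dt`. -/
theorem sqrt_variance_integral_bound
    (d : ℕ) (hd : 1 ≤ d) (σ : ℝ) (hσ : 0 < σ)
    (P : Measure (EuclideanSpace ℝ (Fin d))) [IsProbabilityMeasure P] :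
    ∫⁻ x, ENNReal.ofReal
        (Real.sqrt (variance (fun y => gaussDensity d σ (x - y)) P))
      ≤ ENNReal.ofReal ((8 : ℝ) ^ ((d : ℝ) / 2)) +
        ENNReal.ofReal ((2 : ℝ) ^ ((d : ℝ) / 2 + 1) / (σ ^ d * Real.Gamma (d / 2))) *
          ∫⁻ t in Set.Ioi (0 : ℝ), ENNReal.ofReal
            (t ^ (d - 1) * Real.sqrt ((P {y | ‖y‖ > t}).toReal)) := by
  classical
  haveI : Nonempty (Fin d) := ⟨⟨0, by omega⟩⟩
  set E := EuclideanSpace ℝ (Fin d)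
  haveI : Nontrivial E := Module.nontrivial_of_finrank_pos (R := ℝ)
    (by rw [finrank_euclideanSpace_fin]; omega)
  set c : ℝ := (2 * π * σ ^ 2) ^ (-(d : ℝ) / 2) with hc_def
  have hc : 0 < c := Real.rpow_pos_of_pos (by positivity) _
  set q : ℝ → ℝ≥0∞ := fun t => P {y | ‖y‖ > t} with hq_def
  have hq_meas : Measurable q :=
    Antitone.measurable (fun s t hst => measure_mono (fun y hy => lt_of_le_of_lt hst hy))
  set G : ℝ → ℝ≥0∞ := fun r => ENNReal.ofReal (c * Real.sqrt ((q (r/2)).toReal)) with hG_def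
  have hG_meas : Measurable G := by
    apply Measurable.ennreal_ofReal
    exact measurable_const.mul (Real.continuous_sqrt.measurable.comp
      ((ENNReal.measurable_toReal.comp (hq_meas.comp (measurable_id.div_const 2)))))
  have hA1_meas : Measurable fun x : E => ENNReal.ofReal (c * rexp (-(1/(8*σ^2)) * ‖x‖ ^ 2)) := by
    apply Measurable.ennreal_ofReal
    fun_prop
  -- Step 1 : pointwise bound and splitting
  have step1 : ∫⁻ x, ENNReal.ofReal
        (Real.sqrt (variance (fun y => gaussDensity d σ (x - y)) P))
      ≤ (∫⁻ x : E, ENNReal.ofReal (c * rexp (-(1/(8*σ^2)) * ‖x‖ ^ 2)))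
        + ∫⁻ x : E, G ‖x‖ := by
    rw [← lintegral_add_left hA1_meas]
    refine lintegral_mono fun x => ?_
    refine le_trans (ENNReal.ofReal_le_ofReal (ptwise_bound d σ hσ P x)) ?_
    exact ENNReal.ofReal_add_le
  -- Step 2 : the Gaussian piece
  have hb : (0:ℝ) < 1/(8*σ^2) := by positivity
  have step2 : (∫⁻ x : E, ENNReal.ofReal (c * rexp (-(1/(8*σ^2)) * ‖x‖ ^ 2)))
      ≤ ENNReal.ofReal ((8 : ℝ) ^ ((d : ℝ) / 2)) := by
    have hint1 : Integrable (fun x : E => c * rexp (-(1/(8*σ^2)) * ‖x‖ ^ 2)) :=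
      (integrable_rexp_neg_mul_sq_norm' hb).const_mul c
    rw [← ofReal_integral_eq_lintegral_ofReal hint1
      (Filter.Eventually.of_forall fun x => by positivity)]
    refine ENNReal.ofReal_le_ofReal ?_
    rw [integral_const_mul, GaussianFourier.integral_rexp_neg_mul_sq_norm hb, finrank_euclideanSpace_fin]
    have hπb : π / (1/(8*σ^2)) = (2*π*σ^2) * 4 := by
      field_simp
      ring
    rw [hπb]
    have hone : c * (2*π*σ^2) ^ ((d:ℝ)/2) = 1 := by
      rw [hc_def, ← Real.rpow_add (by positivity),
        show -(d:ℝ)/2 + (d:ℝ)/2 = 0 by ring, Real.rpow_zero]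
    calc c * ((2*π*σ^2) * 4) ^ ((d:ℝ)/2)
        = c * ((2*π*σ^2) ^ ((d:ℝ)/2) * 4 ^ ((d:ℝ)/2)) := by
          rw [Real.mul_rpow (by positivity) (by norm_num)]
      _ = (c * (2*π*σ^2) ^ ((d:ℝ)/2)) * 4 ^ ((d:ℝ)/2) := by ring
      _ = 4 ^ ((d:ℝ)/2) := by rw [hone, one_mul]
      _ ≤ 8 ^ ((d:ℝ)/2) := by
          exact Real.rpow_le_rpow (by norm_num) (by norm_num) (by positivity)
  -- Step 3 : the tail piece via polar coordinates
  have step3 : (∫⁻ x : E, G ‖x‖)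
      = ENNReal.ofReal ((2 : ℝ) ^ ((d : ℝ) / 2 + 1) / (σ ^ d * Real.Gamma (d / 2))) *
          ∫⁻ t in Set.Ioi (0 : ℝ), ENNReal.ofReal
            (t ^ (d - 1) * Real.sqrt ((P {y | ‖y‖ > t}).toReal)) := by
    have hpolar := lintegral_fun_norm_addHaar' (volume : Measure E) G hG_meas
    have hE : Module.finrank ℝ E = d := finrank_euclideanSpace_fin
    rw [hE] at hpolar
    rw [hpolar]
    have hF_meas : Measurable fun y : ℝ => ENNReal.ofReal (y ^ (d - 1)) * G y :=
      ((measurable_id.pow_const _).ennreal_ofReal).mul hG_meas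
    rw [lintegral_Ioi_scale _ hF_meas]
    have hcongr : ∫⁻ t in Set.Ioi (0:ℝ), ENNReal.ofReal ((2*t) ^ (d - 1)) * G (2*t)
        = ∫⁻ t in Set.Ioi (0:ℝ),
            (ENNReal.ofReal ((2:ℝ)^(d-1)) * ENNReal.ofReal c) *
              ENNReal.ofReal (t ^ (d - 1) * Real.sqrt ((q t).toReal)) := by
      refine setLIntegral_congr_fun measurableSet_Ioi
        (fun t ht => ?_)
      have ht' : (0:ℝ) < t := ht
      have h2t : 2*t/2 = t := by ring
      rw [hG_def]
      simp only []
      rw [h2t, mul_pow, ENNReal.ofReal_mul (by positivity),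
        ENNReal.ofReal_mul hc.le, ENNReal.ofReal_mul (by positivity)]
      ring
    rw [hcongr, lintegral_const_mul _ (by
      exact ((measurable_id.pow_const _).mul
        (Real.continuous_sqrt.measurable.comp (ENNReal.measurable_toReal.comp hq_meas))).ennreal_ofReal)]
    have hconst : (d : ℝ≥0∞) * volume (Metric.ball (0:E) 1) * 2 *
        (ENNReal.ofReal ((2:ℝ)^(d-1)) * ENNReal.ofReal c)
        = ENNReal.ofReal ((2 : ℝ) ^ ((d : ℝ) / 2 + 1) / (σ ^ d * Real.Gamma (d / 2))) := by
      rw [EuclideanSpace.volume_ball]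
      simp only [Fintype.card_fin, ENNReal.ofReal_one, one_pow, one_mul]
      rw [show ((d:ℝ≥0∞)) = ENNReal.ofReal (d:ℝ) by simp,
        show (2:ℝ≥0∞) = ENNReal.ofReal (2:ℝ) by norm_num,
        ← ENNReal.ofReal_mul (by positivity), ← ENNReal.ofReal_mul (by positivity),
        ← ENNReal.ofReal_mul (by positivity), ← ENNReal.ofReal_mul (by positivity)]
      congr 1
      exact const_real_eq d hd σ hσ
    calc (d : ℝ≥0∞) * volume (Metric.ball (0:E) 1) *
          (2 * ((ENNReal.ofReal ((2:ℝ)^(d-1)) * ENNReal.ofReal c) *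
            ∫⁻ t in Set.Ioi (0:ℝ), ENNReal.ofReal (t ^ (d - 1) * Real.sqrt ((q t).toReal))))
        = ((d : ℝ≥0∞) * volume (Metric.ball (0:E) 1) * 2 *
            (ENNReal.ofReal ((2:ℝ)^(d-1)) * ENNReal.ofReal c)) *
            ∫⁻ t in Set.Ioi (0:ℝ), ENNReal.ofReal (t ^ (d - 1) * Real.sqrt ((q t).toReal)) := by
          ring
      _ = _ := by rw [hconst]
  calc ∫⁻ x, ENNReal.ofReal
        (Real.sqrt (variance (fun y => gaussDensity d σ (x - y)) P))
      ≤ (∫⁻ x : E, ENNReal.ofReal (c * rexp (-(1/(8*σ^2)) * ‖x‖ ^ 2)))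
        + ∫⁻ x : E, G ‖x‖ := step1
    _ ≤ ENNReal.ofReal ((8 : ℝ) ^ ((d : ℝ) / 2)) +
        ENNReal.ofReal ((2 : ℝ) ^ ((d : ℝ) / 2 + 1) / (σ ^ d * Real.Gamma (d / 2))) *
          ∫⁻ t in Set.Ioi (0 : ℝ), ENNReal.ofReal
            (t ^ (d - 1) * Real.sqrt ((P {y | ‖y‖ > t}).toReal)) := by
        rw [← step3]
        exact add_le_add step2 le_rfl
end

section
/- Let d ≥ 1, σ > 0, and let P be a Borel probability measure on ℝ^d satisfying ∫_{ℝ^d} Var_P(φ_σ(x−·)) / (P∗φ_σ(x)) dx < ∞. Let X_1,…,X_n be i.i.d. with law P and P_n the empirical measure. Then for every n ≥ 1, n · E[χ²(P_n∗N_σ ‖ P∗N_σ)] = ∫_{ℝ^d} Var_P(φ_σ(x−·)) / (P∗φ_σ(x)) dx. -/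
open MeasureTheory ProbabilityTheory Real Filter
open scoped ENNReal NNReal

/-- Density of the smoothed empirical measure: `p̄_n(x) = n⁻¹ ∑_{i<n} φ_σ(x − X_i)`. -/
noncomputable def empDensity {Ω : Type*} {d : ℕ} (σ : ℝ)
    (X : ℕ → Ω → EuclideanSpace ℝ (Fin d)) (n : ℕ) (ω : Ω)
    (x : EuclideanSpace ℝ (Fin d)) : ℝ :=
  (n : ℝ)⁻¹ * ∑ i ∈ Finset.range n, gaussDensity d σ (x - X i ω)

section Aux

variable {d : ℕ} {σ : ℝ}

lemma gaussConst_pos (hσ : 0 < σ) : 0 < (2 * π * σ ^ 2 : ℝ) ^ (-(d : ℝ) / 2) :=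
  Real.rpow_pos_of_pos (by positivity) _

lemma gaussDensity_pos (hσ : 0 < σ) (x : EuclideanSpace ℝ (Fin d)) :
    0 < gaussDensity d σ x :=
  mul_pos (gaussConst_pos hσ) (Real.exp_pos _)

lemma gaussDensity_le (hσ : 0 < σ) (x : EuclideanSpace ℝ (Fin d)) :
    gaussDensity d σ x ≤ (2 * π * σ ^ 2 : ℝ) ^ (-(d : ℝ) / 2) := by
  have h1 : Real.exp (-‖x‖ ^ 2 / (2 * σ ^ 2)) ≤ 1 := by
    rw [Real.exp_le_one_iff]
    have : (0:ℝ) < 2 * σ ^ 2 := by positivity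
    exact div_nonpos_of_nonpos_of_nonneg (neg_nonpos.mpr (by positivity)) this.le
  simpa [gaussDensity] using
    mul_le_of_le_one_right (gaussConst_pos (d := d) hσ).le h1

lemma gaussDensity_continuous : Continuous (gaussDensity d σ) := by
  unfold gaussDensity
  fun_prop

lemma gaussDensity_measurable : Measurable (gaussDensity d σ) :=
  gaussDensity_continuous.measurable

lemma variance_comp_map {Ω E : Type*} [MeasurableSpace Ω] [MeasurableSpace E]
    (μ : Measure Ω) [IsProbabilityMeasure μ] {T : Ω → E} (hT : Measurable T)
    {f : E → ℝ} (hf : Measurable f) (hfb : MemLp f 2 (μ.map T)) :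
    variance (fun ω => f (T ω)) μ = variance f (μ.map T) := by
  have hPm : IsProbabilityMeasure (μ.map T) := Measure.isProbabilityMeasure_map hT.aemeasurable
  have hmem : MemLp (f ∘ T) 2 μ :=
    (memLp_map_measure_iff hf.aestronglyMeasurable hT.aemeasurable).mp hfb
  have h1 : ∫ y, f y ∂(μ.map T) = ∫ ω, f (T ω) ∂μ :=
    integral_map hT.aemeasurable hf.aestronglyMeasurable
  have h2 : ∫ y, (f y) ^ 2 ∂(μ.map T) = ∫ ω, (f (T ω)) ^ 2 ∂μ :=
    integral_map hT.aemeasurable ((hf.pow_const 2).aestronglyMeasurable)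
  have hmem' : MemLp (fun ω => f (T ω)) 2 μ := hmem
  rw [variance_eq_sub hmem', variance_eq_sub hfb]
  simp only [Pi.pow_apply] at *
  rw [h1, h2]

end Aux

/-- **Exact expected value of the smooth χ²-divergence:**
`n · E[χ²(P_n∗N_σ ∥ P∗N_σ)] = ∫ Var_P(φ_σ(x−·)) / (P∗φ_σ(x)) dx`. -/
theorem smooth_chiSq_expectation
    {Ω : Type*} [MeasurableSpace Ω] (μ : Measure Ω) [IsProbabilityMeasure μ]
    (d : ℕ) (hd : 1 ≤ d) (σ : ℝ) (hσ : 0 < σ)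
    (P : Measure (EuclideanSpace ℝ (Fin d))) [IsProbabilityMeasure P]
    (hP : ∫⁻ x, ENNReal.ofReal
        (variance (fun y => gaussDensity d σ (x - y)) P / ∫ y, gaussDensity d σ (x - y) ∂P)
      < ⊤)
    (X : ℕ → Ω → EuclideanSpace ℝ (Fin d))
    (hmeas : ∀ i, Measurable (X i))
    (hindep : iIndepFun X μ)
    (hlaw : ∀ i, μ.map (X i) = P)
    (n : ℕ) (hn : 1 ≤ n) :
    (n : ℝ≥0∞) * ∫⁻ ω, (∫⁻ x, ENNReal.ofReal
        ((empDensity σ X n ω x - ∫ y, gaussDensity d σ (x - y) ∂P) ^ 2 /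
          ∫ y, gaussDensity d σ (x - y) ∂P)) ∂μ
      = ∫⁻ x, ENNReal.ofReal
          (variance (fun y => gaussDensity d σ (x - y)) P /
            ∫ y, gaussDensity d σ (x - y) ∂P) := by
  classical
  have hn0 : (n : ℝ) ≠ 0 := Nat.cast_ne_zero.mpr (by omega)
  have hnE0 : (n : ℝ≥0∞) ≠ 0 := Nat.cast_ne_zero.mpr (by omega)
  have hnEt : (n : ℝ≥0∞) ≠ ⊤ := ENNReal.natCast_ne_top n
  set C : ℝ := (2 * π * σ ^ 2) ^ (-(d : ℝ) / 2) with hC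
  have hC0 : 0 < C := gaussConst_pos hσ
  set m : EuclideanSpace ℝ (Fin d) → ℝ := fun x => ∫ y, gaussDensity d σ (x - y) ∂P with hm
  have hgc : Continuous (gaussDensity d σ) := gaussDensity_continuous
  have hgmeas : Measurable (gaussDensity d σ) := gaussDensity_measurable
  have hfmeas : ∀ x : EuclideanSpace ℝ (Fin d), Measurable fun y => gaussDensity d σ (x - y) :=
    fun x => hgmeas.comp (measurable_const.sub measurable_id)
  have hbound : ∀ (x y : EuclideanSpace ℝ (Fin d)), ‖gaussDensity d σ (x - y)‖ ≤ C := by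
    intro x y
    rw [Real.norm_eq_abs, abs_of_pos (gaussDensity_pos hσ _)]
    exact gaussDensity_le hσ _
  have hfint : ∀ x, Integrable (fun y => gaussDensity d σ (x - y)) P := fun x =>
    (integrable_const C).mono' (hfmeas x).aestronglyMeasurable (ae_of_all _ fun y => hbound x y)
  have hm_pos : ∀ x, 0 < m x := by
    intro x
    refine (integral_pos_iff_support_of_nonneg
      (fun y => (gaussDensity_pos hσ (x - y)).le) (hfint x)).mpr ?_
    have hsupp : (Function.support fun y => gaussDensity d σ (x - y)) = Set.univ :=
      Set.eq_univ_of_forall fun y => (gaussDensity_pos hσ _).ne'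
    rw [hsupp]; simp
  have hm_cont : Continuous m := by
    refine continuous_of_dominated (bound := fun _ => C)
      (fun x => (hfmeas x).aestronglyMeasurable)
      (fun x => ae_of_all _ fun y => hbound x y)
      (integrable_const C)
      (ae_of_all _ fun y => hgc.comp (continuous_id.sub continuous_const))
  have hm_meas : Measurable m := hm_cont.measurable
  -- pointwise-in-x computation
  have key : ∀ x : EuclideanSpace ℝ (Fin d),
      ∫⁻ ω, ENNReal.ofReal ((empDensity σ X n ω x - m x) ^ 2 / m x) ∂μ
        = ENNReal.ofReal (variance (fun y => gaussDensity d σ (x - y)) P / m x) / n := by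
    intro x
    set f : EuclideanSpace ℝ (Fin d) → ℝ := fun y => gaussDensity d σ (x - y) with hf
    have hfm : Measurable f := hfmeas x
    have hfmem : MemLp f 2 P :=
      MemLp.of_bound hfm.aestronglyMeasurable C (ae_of_all _ fun y => hbound x y)
    set Y : ℕ → Ω → ℝ := fun i ω => f (X i ω) with hY
    have hYmeas : ∀ i, Measurable (Y i) := fun i => hfm.comp (hmeas i)
    have hYmem : ∀ i, MemLp (Y i) 2 μ := by
      intro i
      have : MemLp f 2 (μ.map (X i)) := (hlaw i).symm ▸ hfmem
      exact (memLp_map_measure_iff hfm.aestronglyMeasurable (hmeas i).aemeasurable).mp this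
    have hYint : ∀ i, ∫ ω, Y i ω ∂μ = m x := by
      intro i
      rw [hm, hY]
      simp only
      rw [← hlaw i, integral_map (hmeas i).aemeasurable hfm.aestronglyMeasurable]
    have hYvar : ∀ i, variance (Y i) μ = variance f P := by
      intro i
      have hfb : MemLp f 2 (μ.map (X i)) := (hlaw i).symm ▸ hfmem
      have := variance_comp_map μ (hmeas i) hfm hfb
      rw [hlaw i] at this
      exact this
    set S : Ω → ℝ := ∑ i ∈ Finset.range n, Y i with hS
    have hS_apply : ∀ ω, S ω = ∑ i ∈ Finset.range n, Y i ω := fun ω => by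
      rw [hS]; simp
    have hS_mem : MemLp S 2 μ := memLp_finset_sum' _ (fun i _ => hYmem i)
    have hS_int : ∫ ω, S ω ∂μ = n * m x := by
      rw [hS]
      have : ∫ ω, (∑ i ∈ Finset.range n, Y i) ω ∂μ = ∑ i ∈ Finset.range n, ∫ ω, Y i ω ∂μ := by
        simp only [Finset.sum_apply]
        exact integral_finset_sum _ (fun i _ => (hYmem i).integrable one_le_two)
      rw [this]
      simp [hYint]
    have hpair : Set.Pairwise ↑(Finset.range n) fun i j => IndepFun (Y i) (Y j) μ :=
      fun i _ j _ hij => (hindep.indepFun hij).comp hfm hfm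
    have hS_var : variance S μ = n * variance f P := by
      rw [hS, IndepFun.variance_sum (fun i _ => hYmem i) hpair]
      simp [hYvar]
    set emp : Ω → ℝ := fun ω => empDensity σ X n ω x with hemp
    have hemp_eq : emp = fun ω => (n : ℝ)⁻¹ * S ω := by
      funext ω
      rw [hemp, hS]
      simp [empDensity, hY, hf]
    have hemp_mem : MemLp emp 2 μ := by
      rw [hemp_eq]
      exact hS_mem.const_mul _
    have hemp_mean : ∫ ω, emp ω ∂μ = m x := by
      rw [hemp_eq, integral_const_mul, hS_int]
      field_simp
    have hemp_var : variance emp μ = variance f P / n := by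
      rw [hemp_eq, variance_const_mul, hS_var]
      field_simp
    have hsq_int : Integrable (fun ω => (emp ω - m x) ^ 2) μ :=
      (hemp_mem.sub (memLp_const (m x))).integrable_sq
    have h_sq_eq : ∫ ω, (emp ω - m x) ^ 2 ∂μ = variance f P / n := by
      rw [← hemp_var, variance_eq_integral hemp_mem.aemeasurable, hemp_mean]
    have hint1 : ∫⁻ ω, ENNReal.ofReal ((emp ω - m x) ^ 2) ∂μ
        = ENNReal.ofReal (variance f P / n) := by
      rw [← ofReal_integral_eq_lintegral_ofReal hsq_int (ae_of_all _ fun ω => sq_nonneg _),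
        h_sq_eq]
    have hmx := hm_pos x
    have hmE0 : ENNReal.ofReal (m x) ≠ 0 := by
      simp [ENNReal.ofReal_eq_zero, not_le, hmx]
    calc ∫⁻ ω, ENNReal.ofReal ((empDensity σ X n ω x - m x) ^ 2 / m x) ∂μ
        = ∫⁻ ω, ENNReal.ofReal ((emp ω - m x) ^ 2) * (ENNReal.ofReal (m x))⁻¹ ∂μ := by
          congr 1
          funext ω
          rw [ENNReal.ofReal_div_of_pos hmx, div_eq_mul_inv]
      _ = ENNReal.ofReal (variance f P / n) * (ENNReal.ofReal (m x))⁻¹ := by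
          rw [lintegral_mul_const' _ _ (ENNReal.inv_ne_top.mpr hmE0), hint1]
      _ = ENNReal.ofReal (variance f P / m x) / n := by
          rw [ENNReal.ofReal_div_of_pos (by exact_mod_cast Nat.pos_of_ne_zero (by omega) : (0:ℝ) < n),
            ENNReal.ofReal_div_of_pos hmx, ENNReal.ofReal_natCast]
          simp only [div_eq_mul_inv]
          ring
  -- joint measurability and Tonelli
  have hjm : Measurable (Function.uncurry fun (ω : Ω) (x : EuclideanSpace ℝ (Fin d)) =>
      ENNReal.ofReal ((empDensity σ X n ω x - m x) ^ 2 / m x)) := by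
    have h1 : Measurable fun p : Ω × EuclideanSpace ℝ (Fin d) => empDensity σ X n p.1 p.2 := by
      unfold empDensity
      exact measurable_const.mul (Finset.measurable_sum _ fun i _ =>
        hgmeas.comp (measurable_snd.sub ((hmeas i).comp measurable_fst)))
    have h2 : Measurable fun p : Ω × EuclideanSpace ℝ (Fin d) => m p.2 :=
      hm_meas.comp measurable_snd
    exact (((h1.sub h2).pow_const 2).div h2).ennreal_ofReal
  rw [lintegral_lintegral_swap hjm.aemeasurable]
  calc (n : ℝ≥0∞) * ∫⁻ x, ∫⁻ ω, ENNReal.ofReal ((empDensity σ X n ω x - m x) ^ 2 / m x) ∂μ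
      = (n : ℝ≥0∞) * ∫⁻ x, ENNReal.ofReal
          (variance (fun y => gaussDensity d σ (x - y)) P / m x) * (n : ℝ≥0∞)⁻¹ := by
        congr 1
        refine lintegral_congr fun x => ?_
        rw [key x, div_eq_mul_inv]
    _ = (n : ℝ≥0∞) * ((∫⁻ x, ENNReal.ofReal
          (variance (fun y => gaussDensity d σ (x - y)) P / m x)) * (n : ℝ≥0∞)⁻¹) := by
        rw [lintegral_mul_const' _ _ (ENNReal.inv_ne_top.mpr hnE0)]
    _ = ∫⁻ x, ENNReal.ofReal (variance (fun y => gaussDensity d σ (x - y)) P / m x) := by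
        rw [mul_comm, mul_assoc, ENNReal.inv_mul_cancel hnE0 hnEt, mul_one]
end

section
/- Let X be a mean-zero ℝ^d-valued random variable that is β-sub-Gaussian, i.e., E[exp(α·X)] ≤ e^{β²‖α‖²/2} for all α ∈ ℝ^d. Then for every η with 0 ≤ η < 1/(2β²), E[e^{η‖X‖²}] ≤ (1 − 2β²η)^{−d/2}. -/
open MeasureTheory ProbabilityTheory Real Filter
open scoped ENNReal NNReal RealInnerProductSpace

lemma pi_integral_prod {ι : Type} [Fintype ι] (m : Measure ℝ) [SigmaFinite m] (f : ι → ℝ → ℝ) :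
    ∫ x : ι → ℝ, ∏ i, f i (x i) ∂Measure.pi (fun _ => m) = ∏ i, ∫ a, f i a ∂m := by
  letI : MeasureSpace ℝ := ⟨m⟩
  rw [show Measure.pi (fun _ : ι => m) = (volume : Measure (ι → ℝ)) from (volume_pi).symm]
  exact integral_fintype_prod_eq_prod (fun i => f i)

lemma pi_integrable_prod {ι : Type} [Fintype ι] (m : Measure ℝ) [SigmaFinite m] (f : ι → ℝ → ℝ)
    (hf : ∀ i, Integrable (f i) m) :
    Integrable (fun x : ι → ℝ => ∏ i, f i (x i)) (Measure.pi (fun _ => m)) := by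
  letI : MeasureSpace ℝ := ⟨m⟩
  rw [show Measure.pi (fun _ : ι => m) = (volume : Measure (ι → ℝ)) from (volume_pi).symm]
  exact Integrable.fintype_prod hf

lemma integrable_exp_quad {b : ℝ} (hb : 0 < b) (q : ℝ) :
    Integrable (fun a : ℝ => exp (-b * a^2 + q * a)) := by
  have key : ∀ a : ℝ, -b * a^2 + q * a = -b * (a - q/(2*b))^2 + q^2/(4*b) := by
    intro a; field_simp; ring
  simp_rw [key, Real.exp_add]
  exact (((integrable_exp_neg_mul_sq hb).comp_sub_right (q/(2*b)))).mul_const _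

lemma integral_exp_quad {b : ℝ} (hb : 0 < b) (q : ℝ) :
    ∫ a : ℝ, exp (-b * a^2 + q * a) = Real.sqrt (π / b) * exp (q^2 / (4*b)) := by
  have key : ∀ a : ℝ, -b * a^2 + q * a = -b * (a - q/(2*b))^2 + q^2/(4*b) := by
    intro a; field_simp; ring
  simp_rw [key, Real.exp_add, integral_mul_const]
  rw [integral_sub_right_eq_self (fun a => rexp (-b * a^2)) (q/(2*b)), integral_gaussian]

section Gauss
variable {v : ℝ≥0}

lemma gaussian_integral_eq (hv : v ≠ 0) (g : ℝ → ℝ) :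
    ∫ a, g a ∂(gaussianReal 0 v) = ∫ a, gaussianPDFReal 0 v a * g a := by
  rw [gaussianReal_of_var_ne_zero 0 hv]
  have h : (gaussianPDF 0 v) = fun x => ((Real.toNNReal (gaussianPDFReal 0 v x) : ℝ≥0) : ℝ≥0∞) := rfl
  rw [h, integral_withDensity_eq_integral_smul ((measurable_gaussianPDFReal 0 v).real_toNNReal)]
  congr 1; ext a
  simp [NNReal.smul_def, Real.coe_toNNReal _ (gaussianPDFReal_nonneg 0 v a)]

lemma gaussian_integrable_iff (hv : v ≠ 0) (g : ℝ → ℝ) :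
    Integrable g (gaussianReal 0 v) ↔ Integrable (fun a => gaussianPDFReal 0 v a * g a) := by
  rw [gaussianReal_of_var_ne_zero 0 hv]
  have h : (gaussianPDF 0 v) = fun x => ((Real.toNNReal (gaussianPDFReal 0 v x) : ℝ≥0) : ℝ≥0∞) := rfl
  rw [h, integrable_withDensity_iff_integrable_smul ((measurable_gaussianPDFReal 0 v).real_toNNReal)]
  have he : ∀ a : ℝ, (Real.toNNReal (gaussianPDFReal 0 v a)) • g a = gaussianPDFReal 0 v a * g a := by
    intro a; simp [NNReal.smul_def, Real.coe_toNNReal _ (gaussianPDFReal_nonneg 0 v a)]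
  constructor <;> intro hI
  · exact hI.congr (Filter.Eventually.of_forall fun a => he a)
  · exact hI.congr (Filter.Eventually.of_forall fun a => (he a).symm)

variable {p : ℝ}

lemma pdf_mul_exp_quad (hv : v ≠ 0) (q : ℝ) (a : ℝ) :
    gaussianPDFReal 0 v a * exp (p * a^2 + q * a)
      = (Real.sqrt (2*π*v))⁻¹ * exp (-(1/(2*(v:ℝ)) - p) * a^2 + q * a) := by
  have hv0 : 0 < (v:ℝ) := NNReal.coe_pos.mpr (pos_iff_ne_zero.mpr hv)
  rw [gaussianPDFReal, mul_assoc, ← Real.exp_add]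
  congr 2
  field_simp
  ring

lemma gaussian_integrable_exp_quad (hv : v ≠ 0) (q : ℝ) (hp : 2 * (v:ℝ) * p < 1) :
    Integrable (fun a => exp (p * a^2 + q * a)) (gaussianReal 0 v) := by
  have hv0 : 0 < (v:ℝ) := NNReal.coe_pos.mpr (pos_iff_ne_zero.mpr hv)
  have hb : (0:ℝ) < 1/(2*(v:ℝ)) - p := by
    rw [sub_pos, lt_div_iff₀ (by positivity)]; nlinarith
  rw [gaussian_integrable_iff hv]
  simp_rw [pdf_mul_exp_quad hv q]
  exact (integrable_exp_quad hb q).const_mul _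

lemma gaussian_integral_exp_quad (hv : v ≠ 0) (q : ℝ) (hp : 2 * (v:ℝ) * p < 1) :
    ∫ a, exp (p * a^2 + q * a) ∂(gaussianReal 0 v)
      = (Real.sqrt (1 - 2 * (v:ℝ) * p))⁻¹ * exp (q^2 * v / (2 * (1 - 2 * (v:ℝ) * p))) := by
  have hv0 : 0 < (v:ℝ) := NNReal.coe_pos.mpr (pos_iff_ne_zero.mpr hv)
  have hs : (0:ℝ) < 1 - 2 * (v:ℝ) * p := by linarith
  have hb : (0:ℝ) < 1/(2*(v:ℝ)) - p := by
    rw [sub_pos, lt_div_iff₀ (by positivity)]; nlinarith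
  rw [gaussian_integral_eq hv]
  simp_rw [pdf_mul_exp_quad hv q]
  rw [integral_const_mul, integral_exp_quad hb q]
  have h1 : π / (1/(2*(v:ℝ)) - p) = (2*π*v) / (1 - 2 * (v:ℝ) * p) := by
    field_simp
  have h2 : q^2 / (4 * (1/(2*(v:ℝ)) - p)) = q^2 * v / (2 * (1 - 2 * (v:ℝ) * p)) := by
    rw [div_eq_div_iff (by positivity) (by positivity)]; field_simp; ring
  rw [h1, h2, Real.sqrt_div' _ ?pos]
  case pos => exact le_of_lt (by positivity)
  have hA : Real.sqrt (2*π*(v:ℝ)) ≠ 0 := by positivity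
  field_simp

/-- Step A: lintegral over the Gaussian product measure of `exp(∑ tᵢ αᵢ)`. -/
lemma stepA (hv : v ≠ 0) {d : ℕ} (t : Fin d → ℝ) :
    ∫⁻ α : Fin d → ℝ, ENNReal.ofReal (exp (∑ i, t i * α i))
        ∂Measure.pi (fun _ => gaussianReal 0 v)
      = ENNReal.ofReal (exp ((v:ℝ) * (∑ i, (t i)^2) / 2)) := by
  have hexp : ∀ α : Fin d → ℝ,
      exp (∑ i, t i * α i) = ∏ i, exp ((0:ℝ) * (α i)^2 + t i * α i) := by
    intro α; rw [← Real.exp_sum]; congr 1; simp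
  simp_rw [hexp]
  have hfi : ∀ i, Integrable (fun a : ℝ => exp ((0:ℝ) * a^2 + t i * a)) (gaussianReal 0 v) :=
    fun i => gaussian_integrable_exp_quad hv (t i) (by norm_num)
  have hInt : Integrable (fun α : Fin d → ℝ => ∏ i, exp ((0:ℝ) * (α i)^2 + t i * (α i)))
      (Measure.pi (fun _ => gaussianReal 0 v)) := pi_integrable_prod _ _ hfi
  rw [← ofReal_integral_eq_lintegral_ofReal hInt
    (Filter.Eventually.of_forall fun α => Finset.prod_nonneg fun i _ => (Real.exp_pos _).le)]
  rw [pi_integral_prod (gaussianReal 0 v) (fun i a => rexp ((0:ℝ) * a^2 + t i * a))]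
  congr 1
  have : ∀ i : Fin d, ∫ a, exp ((0:ℝ) * a^2 + t i * a) ∂(gaussianReal 0 v)
      = exp ((v:ℝ) * (t i)^2 / 2) := by
    intro i
    rw [gaussian_integral_exp_quad hv (t i) (by norm_num)]
    norm_num
    ring_nf
  simp_rw [this, ← Real.exp_sum]
  congr 1
  rw [Finset.mul_sum, Finset.sum_div]

/-- Step B: lintegral over the Gaussian product measure of `exp(c ∑ αᵢ²)`. -/
lemma stepB (hv : v ≠ 0) {d : ℕ} {c : ℝ} (hc : 2 * (v:ℝ) * c < 1) :
    ∫⁻ α : Fin d → ℝ, ENNReal.ofReal (exp (c * ∑ i, (α i)^2))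
        ∂Measure.pi (fun _ => gaussianReal 0 v)
      = ENNReal.ofReal (((Real.sqrt (1 - 2 * (v:ℝ) * c))⁻¹)^d) := by
  have hexp : ∀ α : Fin d → ℝ,
      exp (c * ∑ i, (α i)^2) = ∏ i, exp (c * (α i)^2 + (0:ℝ) * α i) := by
    intro α; rw [← Real.exp_sum]; congr 1; rw [Finset.mul_sum]; simp
  simp_rw [hexp]
  have hfi : ∀ i : Fin d, Integrable (fun a : ℝ => exp (c * a^2 + (0:ℝ) * a)) (gaussianReal 0 v) :=
    fun i => gaussian_integrable_exp_quad hv 0 hc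
  have hInt : Integrable (fun α : Fin d → ℝ => ∏ i, exp (c * (α i)^2 + (0:ℝ) * (α i)))
      (Measure.pi (fun _ => gaussianReal 0 v)) := pi_integrable_prod _ _ hfi
  rw [← ofReal_integral_eq_lintegral_ofReal hInt
    (Filter.Eventually.of_forall fun α => Finset.prod_nonneg fun i _ => (Real.exp_pos _).le)]
  rw [pi_integral_prod (gaussianReal 0 v) (fun _ a => rexp (c * a^2 + (0:ℝ) * a))]
  congr 1
  have : ∀ i : Fin d, ∫ a, exp (c * a^2 + (0:ℝ) * a) ∂(gaussianReal 0 v)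
      = (Real.sqrt (1 - 2 * (v:ℝ) * c))⁻¹ := by
    intro i
    rw [gaussian_integral_exp_quad hv 0 hc]
    norm_num
  rw [Finset.prod_congr rfl (fun i _ => this i), Finset.prod_const, Finset.card_univ,
    Fintype.card_fin]

end Gauss

/-- **Sub-Gaussian squared-norm moment bound:** if `X` is mean-zero `β`-sub-Gaussian on `ℝ^d`
then for every `0 ≤ η < 1/(2β²)`, `E[e^{η‖X‖²}] ≤ (1 − 2β²η)^{−d/2}`. -/
theorem subGaussian_exp_sq_norm_bound
    {Ω : Type*} [MeasurableSpace Ω] (μ : Measure Ω) [IsProbabilityMeasure μ]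
    (d : ℕ) (hd : 1 ≤ d) (β : ℝ) (hβ : 0 < β)
    (X : Ω → EuclideanSpace ℝ (Fin d)) (hX : Measurable X)
    (hint : Integrable X μ) (hmean : ∫ ω, X ω ∂μ = 0)
    (hsub : ∀ α : EuclideanSpace ℝ (Fin d),
      ∫⁻ ω, ENNReal.ofReal (Real.exp ⟪α, X ω⟫) ∂μ
        ≤ ENNReal.ofReal (Real.exp (β ^ 2 * ‖α‖ ^ 2 / 2)))
    (η : ℝ) (hη₀ : 0 ≤ η) (hη₁ : η < 1 / (2 * β ^ 2)) :
    ∫⁻ ω, ENNReal.ofReal (Real.exp (η * ‖X ω‖ ^ 2)) ∂μ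
      ≤ ENNReal.ofReal ((1 - 2 * β ^ 2 * η) ^ (-(d : ℝ) / 2)) := by
  have hnormE : ∀ x : EuclideanSpace ℝ (Fin d), ‖x‖^2 = ∑ i, (x i)^2 := by
    intro x
    rw [EuclideanSpace.norm_eq, Real.sq_sqrt]
    · simp [sq_abs]
    · positivity
  by_cases hη : η = 0
  · subst hη
    simp only [zero_mul, Real.exp_zero, ENNReal.ofReal_one, lintegral_one, measure_univ,
      mul_zero, sub_zero, Real.one_rpow]
    simp
  · have hηpos : 0 < η := lt_of_le_of_ne hη₀ (Ne.symm hη)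
    set v : ℝ≥0 := Real.toNNReal (2*η) with hv_def
    have hv : v ≠ 0 := by
      simp only [hv_def, ne_eq, Real.toNNReal_eq_zero, not_le]
      linarith
    have hvr : (v:ℝ) = 2*η := Real.coe_toNNReal _ (by linarith)
    set c : ℝ := β^2/2 with hc_def
    have h1 : η * (2*β^2) < 1 := (lt_div_iff₀ (by positivity)).mp hη₁
    have hc : 2 * (v:ℝ) * c < 1 := by
      have : 2 * (v:ℝ) * c = η * (2*β^2) := by rw [hvr, hc_def]; ring
      rw [this]; exact h1
    have hs : (0:ℝ) < 1 - 2*β^2*η := by nlinarith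
    set ν : Measure (Fin d → ℝ) := Measure.pi (fun _ => gaussianReal 0 v) with hν_def
    have hip : ∀ (α : EuclideanSpace ℝ (Fin d)) (x : EuclideanSpace ℝ (Fin d)),
        ⟪α, x⟫ = ∑ i, x i * α i := by
      intro α x
      rw [PiLp.inner_apply]
      simp [RCLike.inner_apply, mul_comm]
    have hsub' : ∀ a : EuclideanSpace ℝ (Fin d),
        ∫⁻ ω, ENNReal.ofReal (exp (∑ i, X ω i * a i)) ∂μ
          ≤ ENNReal.ofReal (exp (c * ∑ i, (a i)^2)) := by
      intro a
      have h := hsub a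
      simp_rw [hip] at h
      have e2 : β ^ 2 * ‖a‖ ^ 2 / 2 = c * ∑ i, (a i)^2 := by
        rw [hnormE, hc_def]; ring
      rwa [e2] at h
    -- main chain
    calc ∫⁻ ω, ENNReal.ofReal (Real.exp (η * ‖X ω‖ ^ 2)) ∂μ
        = ∫⁻ ω, ∫⁻ α : Fin d → ℝ, ENNReal.ofReal (exp (∑ i, X ω i * α i)) ∂ν ∂μ := by
          refine lintegral_congr fun ω => ?_
          rw [hν_def, stepA hv (fun i => X ω i)]
          congr 2
          rw [hnormE (X ω), hvr]
          ring
      _ = ∫⁻ α : Fin d → ℝ, ∫⁻ ω, ENNReal.ofReal (exp (∑ i, X ω i * α i)) ∂μ ∂ν := by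
          refine lintegral_lintegral_swap ?_
          apply Measurable.aemeasurable
          apply ENNReal.measurable_ofReal.comp
          apply Real.measurable_exp.comp
          apply Finset.measurable_sum
          intro i _
          exact ((measurable_pi_apply i).comp ((WithLp.measurable_ofLp 2 _).comp (hX.comp measurable_fst))).mul
            ((measurable_pi_apply i).comp measurable_snd)
      _ ≤ ∫⁻ α : Fin d → ℝ, ENNReal.ofReal (exp (c * ∑ i, (α i)^2)) ∂ν :=
          lintegral_mono fun α => hsub' (WithLp.toLp 2 α)
      _ = ENNReal.ofReal (((Real.sqrt (1 - 2 * (v:ℝ) * c))⁻¹)^d) := stepB hv hc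
      _ = ENNReal.ofReal ((1 - 2 * β ^ 2 * η) ^ (-(d : ℝ) / 2)) := by
          congr 1
          have hsc : 1 - 2 * (v:ℝ) * c = 1 - 2*β^2*η := by rw [hvr, hc_def]; ring
          rw [hsc, Real.sqrt_eq_rpow, ← Real.rpow_neg hs.le, ← Real.rpow_natCast
            ((1 - 2*β^2*η) ^ (-(1/2:ℝ))) d, ← Real.rpow_mul hs.le]
          congr 1
          ring
end

section
/- Let d ≥ 1, σ > 0, and let P be a Borel probability measure on ℝ^d that is β-sub-Gaussian for some β < σ/√2. Then ∫_{ℝ^d} Var_P(φ_σ(x−·)) / (P∗φ_σ(x)) dx < ∞. -/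
open MeasureTheory ProbabilityTheory Real Filter
open scoped ENNReal NNReal RealInnerProductSpace

/-- A probability measure `P` on `ℝ^d` is `β`-sub-Gaussian if for `X ∼ P`,
`E[exp(α · (X − E[X]))] ≤ e^{β²‖α‖²/2}` for all `α ∈ ℝ^d`. -/
def IsSubGaussian (d : ℕ) (β : ℝ) (P : Measure (EuclideanSpace ℝ (Fin d))) : Prop :=
  ∀ α : EuclideanSpace ℝ (Fin d),
    ∫⁻ y, ENNReal.ofReal (Real.exp ⟪α, y - ∫ z, z ∂P⟫) ∂P
      ≤ ENNReal.ofReal (Real.exp (β ^ 2 * ‖α‖ ^ 2 / 2))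

section aux
variable {d : ℕ}

lemma cast_aux (b c : ℝ) (w v : EuclideanSpace ℝ (Fin d)) :
    ((rexp (-b * ‖v‖^2 + c * ⟪w, v⟫) : ℝ) : ℂ) =
      Complex.exp (-(b:ℂ) * ‖v‖^2 + (c:ℂ) * (⟪w, v⟫ : ℝ)) := by
  rw [Complex.ofReal_exp]; norm_cast

lemma integrable_rexp_gauss (b c : ℝ) (hb : 0 < b) (w : EuclideanSpace ℝ (Fin d)) :
    Integrable (fun v : EuclideanSpace ℝ (Fin d) => rexp (-b * ‖v‖^2 + c * ⟪w, v⟫)) := by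
  have h := (GaussianFourier.integrable_cexp_neg_mul_sq_norm_add (V := EuclideanSpace ℝ (Fin d))
    (b := (b : ℂ)) (by simpa using hb) (c : ℂ) w).re
  refine h.congr (Filter.Eventually.of_forall fun v => ?_)
  show RCLike.re _ = _
  rw [← cast_aux b c w v]
  exact Complex.ofReal_re _

lemma integral_rexp_gauss (b c : ℝ) (hb : 0 < b) (w : EuclideanSpace ℝ (Fin d)) :
    ∫ v : EuclideanSpace ℝ (Fin d), rexp (-b * ‖v‖^2 + c * ⟪w, v⟫) =
      (π / b) ^ ((d:ℝ) / 2) * rexp (c^2 * ‖w‖^2 / (4*b)) := by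
  have h := GaussianFourier.integral_cexp_neg_mul_sq_norm_add (V := EuclideanSpace ℝ (Fin d))
    (b := (b : ℂ)) (by simpa using hb) (c : ℂ) w
  have hre : ∫ v : EuclideanSpace ℝ (Fin d), ((rexp (-b * ‖v‖^2 + c * ⟪w, v⟫) : ℝ) : ℂ)
      = ((∫ v : EuclideanSpace ℝ (Fin d), rexp (-b * ‖v‖^2 + c * ⟪w, v⟫) : ℝ) : ℂ) :=
    integral_ofReal (𝕜 := ℂ)
  have key : (((∫ v : EuclideanSpace ℝ (Fin d), rexp (-b * ‖v‖^2 + c * ⟪w, v⟫)) : ℝ) : ℂ)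
      = (((π / b) ^ ((d:ℝ) / 2) * rexp (c^2 * ‖w‖^2 / (4*b)) : ℝ) : ℂ) := by
    rw [← hre]
    simp_rw [cast_aux b c w]
    rw [h, Complex.ofReal_mul, Complex.ofReal_exp]
    have hπb : (0:ℝ) ≤ π / b := by positivity
    have h2 : ((Module.finrank ℝ (EuclideanSpace ℝ (Fin d)) : ℂ)) / 2 = (((d:ℝ)/2 : ℝ) : ℂ) := by
      rw [finrank_euclideanSpace_fin]; push_cast; ring
    rw [Complex.ofReal_cpow hπb, h2]
    push_cast
    ring_nf
  exact_mod_cast key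

/-- moment bound from sub-Gaussianity -/
lemma moment_bound (β : ℝ) (hβ : 0 < β) (P : Measure (EuclideanSpace ℝ (Fin d)))
    [IsProbabilityMeasure P] (hsub : IsSubGaussian d β P) (s : ℝ) (hs0 : 0 < s)
    (hs : 2 * s * β ^ 2 < 1) :
    ∫⁻ y, ENNReal.ofReal (rexp (s * ‖y - ∫ z, z ∂P‖ ^ 2)) ∂P < ⊤ := by
  set m := ∫ z, z ∂P with hm
  set t : ℝ := 1 / (4 * s) with ht
  have ht0 : 0 < t := by positivity
  have htβ : β ^ 2 / 2 < t := by
    rw [ht, lt_div_iff₀ (by positivity)]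
    nlinarith
  set C : ℝ := (π / t) ^ ((d:ℝ) / 2) with hC
  have hC0 : 0 < C := by positivity
  -- Gaussian representation of exp(s‖z‖²)
  have key : ∀ z : EuclideanSpace ℝ (Fin d),
      ENNReal.ofReal (rexp (s * ‖z‖ ^ 2)) = ENNReal.ofReal C⁻¹ *
        ∫⁻ α, ENNReal.ofReal (rexp (-t * ‖α‖ ^ 2 + ⟪α, z⟫)) := by
    intro z
    have hfeq : (fun α : EuclideanSpace ℝ (Fin d) => rexp (-t * ‖α‖ ^ 2 + ⟪α, z⟫))
        = fun α => rexp (-t * ‖α‖ ^ 2 + 1 * ⟪z, α⟫) := by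
      funext α; rw [real_inner_comm]; ring_nf
    have hint : Integrable (fun α : EuclideanSpace ℝ (Fin d) =>
        rexp (-t * ‖α‖ ^ 2 + ⟪α, z⟫)) := by
      rw [hfeq]; exact integrable_rexp_gauss t 1 ht0 z
    rw [← ofReal_integral_eq_lintegral_ofReal hint
      (Eventually.of_forall fun α => (exp_pos _).le)]
    rw [hfeq, integral_rexp_gauss t 1 ht0 z, ← ENNReal.ofReal_mul (by positivity)]
    congr 1
    rw [← hC]
    have h4t : 1 ^ 2 * ‖z‖ ^ 2 / (4 * t) = s * ‖z‖ ^ 2 := by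
      rw [ht]; field_simp
    rw [h4t, ← mul_assoc, inv_mul_cancel₀ (ne_of_gt hC0), one_mul]
  simp_rw [key]
  rw [lintegral_const_mul' _ _ ENNReal.ofReal_ne_top]
  -- swap the two integrals
  have hcont : Continuous fun p : (EuclideanSpace ℝ (Fin d)) × (EuclideanSpace ℝ (Fin d)) =>
      ENNReal.ofReal (rexp (-t * ‖p.2‖ ^ 2 + ⟪p.2, p.1 - m⟫)) := by
    apply ENNReal.continuous_ofReal.comp
    apply Real.continuous_exp.comp
    exact ((continuous_const.mul (continuous_snd.norm.pow 2)).add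
      (continuous_snd.inner (continuous_fst.sub continuous_const)))
  have hswap : ∫⁻ y, ∫⁻ α, ENNReal.ofReal (rexp (-t * ‖α‖ ^ 2 + ⟪α, y - m⟫)) ∂volume ∂P
      = ∫⁻ α, ∫⁻ y, ENNReal.ofReal (rexp (-t * ‖α‖ ^ 2 + ⟪α, y - m⟫)) ∂P ∂volume :=
    lintegral_lintegral_swap hcont.measurable.aemeasurable
  rw [hswap]
  have hbound : ∫⁻ α, ∫⁻ y, ENNReal.ofReal (rexp (-t * ‖α‖ ^ 2 + ⟪α, y - m⟫)) ∂P ∂volume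
      ≤ ∫⁻ α : EuclideanSpace ℝ (Fin d),
          ENNReal.ofReal (rexp (-(t - β ^ 2 / 2) * ‖α‖ ^ 2)) ∂volume := by
    refine lintegral_mono fun α => ?_
    have h1 : ∫⁻ y, ENNReal.ofReal (rexp (-t * ‖α‖ ^ 2 + ⟪α, y - m⟫)) ∂P
        = ENNReal.ofReal (rexp (-t * ‖α‖ ^ 2)) * ∫⁻ y, ENNReal.ofReal (rexp ⟪α, y - m⟫) ∂P := by
      rw [← lintegral_const_mul' _ _ ENNReal.ofReal_ne_top]
      congr 1; funext y
      rw [← ENNReal.ofReal_mul (exp_pos _).le, ← Real.exp_add]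
    rw [h1]
    calc ENNReal.ofReal (rexp (-t * ‖α‖ ^ 2)) * ∫⁻ y, ENNReal.ofReal (rexp ⟪α, y - m⟫) ∂P
        ≤ ENNReal.ofReal (rexp (-t * ‖α‖ ^ 2)) * ENNReal.ofReal (rexp (β ^ 2 * ‖α‖ ^ 2 / 2)) :=
          mul_le_mul_right (hsub α) _
      _ = ENNReal.ofReal (rexp (-(t - β ^ 2 / 2) * ‖α‖ ^ 2)) := by
          rw [← ENNReal.ofReal_mul (exp_pos _).le, ← Real.exp_add]
          congr 2; ring
  have hfin : ∫⁻ α : EuclideanSpace ℝ (Fin d),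
      ENNReal.ofReal (rexp (-(t - β ^ 2 / 2) * ‖α‖ ^ 2)) ∂volume < ⊤ := by
    have hint : Integrable (fun α : EuclideanSpace ℝ (Fin d) =>
        rexp (-(t - β ^ 2 / 2) * ‖α‖ ^ 2)) := by
      have := integrable_rexp_gauss (t - β ^ 2 / 2) 0 (by linarith) (0 : EuclideanSpace ℝ (Fin d))
      simpa using this
    exact hint.lintegral_lt_top
  exact ENNReal.mul_lt_top ENNReal.ofReal_lt_top (lt_of_le_of_lt hbound hfin)

end aux

lemma split_ineq {d : ℕ} (σ β : ℝ) (hσ2 : (0:ℝ) < σ ^ 2)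
    (hD1 : (0:ℝ) < 3 * σ ^ 2 + 2 * β ^ 2) (hD2 : (0:ℝ) < σ ^ 2 - 2 * β ^ 2)
    (u z : EuclideanSpace ℝ (Fin d)) :
    ‖u - z‖ ^ 2 / (2 * σ ^ 2) ≤ (2 / (3 * σ ^ 2 + 2 * β ^ 2)) * ‖u‖ ^ 2
      + (2 / (σ ^ 2 - 2 * β ^ 2)) * ‖z‖ ^ 2 := by
  have hn := norm_sub_le u z
  have h1 : ‖u - z‖ ^ 2 ≤ (‖u‖ + ‖z‖) ^ 2 := by
    nlinarith [norm_nonneg (u - z), norm_nonneg u, norm_nonneg z]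
  have e1 : (2 / (3 * σ ^ 2 + 2 * β ^ 2)) * ‖u‖ ^ 2 + (2 / (σ ^ 2 - 2 * β ^ 2)) * ‖z‖ ^ 2 =
      (2 * ‖u‖ ^ 2 * (σ ^ 2 - 2 * β ^ 2) + 2 * ‖z‖ ^ 2 * (3 * σ ^ 2 + 2 * β ^ 2)) /
        ((3 * σ ^ 2 + 2 * β ^ 2) * (σ ^ 2 - 2 * β ^ 2)) := by
    field_simp
  have hM : (0:ℝ) < (3 * σ ^ 2 + 2 * β ^ 2) * (σ ^ 2 - 2 * β ^ 2) := mul_pos hD1 hD2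
  rw [e1, div_le_div_iff₀ (by positivity) hM]
  nlinarith [mul_le_mul_of_nonneg_right h1 hM.le,
    sq_nonneg ((σ ^ 2 - 2 * β ^ 2) * ‖u‖ - (3 * σ ^ 2 + 2 * β ^ 2) * ‖z‖)]

lemma inner_x_integral {d : ℕ} (σ a1 a s : ℝ) (hσ2 : (0:ℝ) < σ ^ 2) (ha0 : 0 < a)
    (ha : a = 1 / σ ^ 2 - a1) (hs' : s = (2 / σ ^ 2) ^ 2 / (4 * a) - 1 / σ ^ 2)
    (m y : EuclideanSpace ℝ (Fin d)) :
    ∫⁻ x, ENNReal.ofReal (rexp (a1 * ‖x - m‖ ^ 2 - ‖x - y‖ ^ 2 / σ ^ 2))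
      = ENNReal.ofReal ((π / a) ^ ((d:ℝ) / 2)) * ENNReal.ofReal (rexp (s * ‖y - m‖ ^ 2)) := by
  obtain ⟨z, hz⟩ : ∃ q : EuclideanSpace ℝ (Fin d), q = y - m := ⟨_, rfl⟩
  rw [← lintegral_add_right_eq_self
    (fun x => ENNReal.ofReal (rexp (a1 * ‖x - m‖ ^ 2 - ‖x - y‖ ^ 2 / σ ^ 2))) m]
  have hsimp : ∀ u : EuclideanSpace ℝ (Fin d), a1 * ‖u + m - m‖ ^ 2 - ‖u + m - y‖ ^ 2 / σ ^ 2
      = -a * ‖u‖ ^ 2 + (2 / σ ^ 2) * ⟪z, u⟫ + -(‖z‖ ^ 2 / σ ^ 2) := by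
    intro u
    have h1 : u + m - m = u := add_sub_cancel_right u m
    have h2 : u + m - y = u - z := by rw [hz]; abel
    rw [h1, h2, norm_sub_sq_real, real_inner_comm u z, ha]
    field_simp
    ring
  simp_rw [hsimp]
  have split : ∀ u : EuclideanSpace ℝ (Fin d), ENNReal.ofReal
        (rexp (-a * ‖u‖ ^ 2 + (2 / σ ^ 2) * ⟪z, u⟫ + -(‖z‖ ^ 2 / σ ^ 2)))
      = ENNReal.ofReal (rexp (-(‖z‖ ^ 2 / σ ^ 2))) *
          ENNReal.ofReal (rexp (-a * ‖u‖ ^ 2 + (2 / σ ^ 2) * ⟪z, u⟫)) := by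
    intro u
    rw [← ENNReal.ofReal_mul (exp_pos _).le, ← Real.exp_add]
    congr 1
    ring
  simp_rw [split]
  rw [lintegral_const_mul' _ _ ENNReal.ofReal_ne_top]
  rw [← ofReal_integral_eq_lintegral_ofReal (integrable_rexp_gauss a (2 / σ ^ 2) ha0 z)
    (Eventually.of_forall fun u => (exp_pos _).le), integral_rexp_gauss a (2 / σ ^ 2) ha0 z]
  rw [ENNReal.ofReal_mul (by positivity)]
  rw [← mul_assoc, mul_comm (ENNReal.ofReal (rexp (-(‖z‖ ^ 2 / σ ^ 2)))), mul_assoc]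
  congr 1
  rw [← ENNReal.ofReal_mul (exp_pos _).le, ← Real.exp_add]
  congr 1
  rw [← hz, hs']
  field_simp
  ring


/-- **Sufficient condition for the χ² integrability condition:** if `P` is `β`-sub-Gaussian
with `β < σ/√2`, then `∫ Var_P(φ_σ(x−·)) / (P∗φ_σ(x)) dx < ∞`. -/
theorem chiSq_condition_of_subGaussian
    (d : ℕ) (hd : 1 ≤ d) (σ : ℝ) (hσ : 0 < σ) (β : ℝ) (hβ : 0 < β)
    (hβσ : β < σ / Real.sqrt 2)
    (P : Measure (EuclideanSpace ℝ (Fin d))) [IsProbabilityMeasure P]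
    (hsub : IsSubGaussian d β P) :
    ∫⁻ x, ENNReal.ofReal
        (variance (fun y => gaussDensity d σ (x - y)) P / ∫ y, gaussDensity d σ (x - y) ∂P)
      < ⊤ := by
  set m : EuclideanSpace ℝ (Fin d) := ∫ z, z ∂P with hm
  have hσ2 : (0:ℝ) < σ ^ 2 := by positivity
  have hrt2 : (0:ℝ) < Real.sqrt 2 := by positivity
  have hβrt : β * Real.sqrt 2 < σ := (lt_div_iff₀ hrt2).mp hβσ
  have hb2 : 2 * β ^ 2 < σ ^ 2 := by
    nlinarith [mul_pos hβ hrt2, sq_sqrt (show (0:ℝ) ≤ 2 by norm_num)]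
  have hD1 : (0:ℝ) < 3 * σ ^ 2 + 2 * β ^ 2 := by nlinarith
  have hD2 : (0:ℝ) < σ ^ 2 - 2 * β ^ 2 := by nlinarith
  have hD3 : (0:ℝ) < σ ^ 2 + 2 * β ^ 2 := by nlinarith
  obtain ⟨c, hc⟩ : ∃ q : ℝ, q = (2 * π * σ ^ 2) ^ (-(d:ℝ) / 2) := ⟨_, rfl⟩
  have hc0 : 0 < c := by rw [hc]; positivity
  obtain ⟨a1, ha1⟩ : ∃ q : ℝ, q = 2 / (3 * σ ^ 2 + 2 * β ^ 2) := ⟨_, rfl⟩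
  obtain ⟨a2, ha2⟩ : ∃ q : ℝ, q = 2 / (σ ^ 2 - 2 * β ^ 2) := ⟨_, rfl⟩
  obtain ⟨s, hs⟩ : ∃ q : ℝ, q = 2 / (σ ^ 2 + 2 * β ^ 2) := ⟨_, rfl⟩
  obtain ⟨a, ha⟩ : ∃ q : ℝ, q = 1 / σ ^ 2 - a1 := ⟨_, rfl⟩
  have ha' : a = (σ ^ 2 + 2 * β ^ 2) / (σ ^ 2 * (3 * σ ^ 2 + 2 * β ^ 2)) := by
    rw [ha, ha1]; field_simp; ring
  have ha0 : 0 < a := by rw [ha']; positivity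
  have ha10 : 0 < a1 := by rw [ha1]; positivity
  have ha20 : 0 < a2 := by rw [ha2]; positivity
  have hs0 : 0 < s := by rw [hs]; positivity
  have hsβ : 2 * s * β ^ 2 < 1 := by
    rw [hs]
    rw [show 2 * (2 / (σ ^ 2 + 2 * β ^ 2)) * β ^ 2 = 4 * β ^ 2 / (σ ^ 2 + 2 * β ^ 2) by ring]
    rw [div_lt_one hD3]; nlinarith
  -- the gaussian density explicitly
  have hgd : ∀ v : EuclideanSpace ℝ (Fin d), gaussDensity d σ v = c * rexp (-(‖v‖ ^ 2 / (2 * σ ^ 2))) := by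
    intro v; rw [gaussDensity, hc]; ring_nf
  -- splitting inequality
  have hsplit : ∀ u z : EuclideanSpace ℝ (Fin d), ‖u - z‖ ^ 2 / (2 * σ ^ 2) ≤ a1 * ‖u‖ ^ 2 + a2 * ‖z‖ ^ 2 := by
    intro u z
    rw [ha1, ha2]
    exact split_ineq σ β hσ2 hD1 hD2 u z
  -- integrability helper
  have bdd : ∀ g : EuclideanSpace ℝ (Fin d) → ℝ, Continuous g → (∀ y, g y ≤ 0) →
      Integrable (fun y => rexp (g y)) P := by
    intro g hg hle
    refine (integrable_const (1:ℝ)).mono' (hg.rexp.aestronglyMeasurable) ?_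
    refine Eventually.of_forall fun y => ?_
    rw [Real.norm_eq_abs, abs_of_pos (exp_pos _)]
    exact Real.exp_le_one_iff.mpr (hle y)
  -- the constant A
  obtain ⟨A, hA⟩ : ∃ q : ℝ, q = ∫ y, rexp (-(a2 * ‖y - m‖ ^ 2)) ∂P := ⟨_, rfl⟩
  have hIntA : Integrable (fun y => rexp (-(a2 * ‖y - m‖ ^ 2))) P := by
    refine bdd _ ?_ fun y => neg_nonpos.mpr (by positivity)
    exact (continuous_const.mul (((continuous_id.sub continuous_const).norm.pow 2))).neg
  have hA0 : 0 < A := by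
    rw [hA]
    refine (integral_pos_iff_support_of_nonneg (fun y => (exp_pos _).le) hIntA).2 ?_
    have hsupp : Function.support (fun y : EuclideanSpace ℝ (Fin d) => rexp (-(a2 * ‖y - m‖ ^ 2))) = Set.univ :=
      Set.eq_univ_of_forall fun y => (exp_pos _).ne'
    rw [hsupp]
    simp
  -- pointwise bound
  have hpt : ∀ x : EuclideanSpace ℝ (Fin d),
      ENNReal.ofReal
        (variance (fun y => gaussDensity d σ (x - y)) P / ∫ y, gaussDensity d σ (x - y) ∂P)
      ≤ ENNReal.ofReal (c / A) *
          ∫⁻ y, ENNReal.ofReal (rexp (a1 * ‖x - m‖ ^ 2 - ‖x - y‖ ^ 2 / σ ^ 2)) ∂P := by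
    intro x
    obtain ⟨w, hw⟩ : ∃ q : ℝ, q = ‖x - m‖ ^ 2 := ⟨_, rfl⟩
    rw [← hw]
    -- integrability facts
    have hIntG : Integrable (fun y => gaussDensity d σ (x - y)) P := by
      have := bdd (fun y => -(‖x - y‖ ^ 2 / (2 * σ ^ 2)))
        ((((continuous_const.sub continuous_id).norm.pow 2).div_const _).neg)
        (fun y => neg_nonpos.mpr (by positivity))
      simp_rw [hgd]
      exact this.const_mul c
    have hIntL : Integrable (fun y : EuclideanSpace ℝ (Fin d) =>
        c * (rexp (-(a1 * w)) * rexp (-(a2 * ‖y - m‖ ^ 2)))) P :=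
      (hIntA.const_mul _).const_mul _
    have hI2int : Integrable (fun y => rexp (-(‖x - y‖ ^ 2 / σ ^ 2))) P := by
      refine bdd _ ?_ fun y => neg_nonpos.mpr (by positivity)
      exact (((continuous_const.sub continuous_id).norm.pow 2).div_const _).neg
    obtain ⟨I2, hI2⟩ : ∃ q : ℝ, q = ∫ y, rexp (-(‖x - y‖ ^ 2 / σ ^ 2)) ∂P := ⟨_, rfl⟩
    have hI2nn : 0 ≤ I2 := hI2 ▸ integral_nonneg fun y => (exp_pos _).le
    -- denominator lower bound
    obtain ⟨L, hL⟩ : ∃ q : ℝ, q = c * (rexp (-(a1 * w)) * A) := ⟨_, rfl⟩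
    have hL0 : 0 < L := by rw [hL]; positivity
    have hDL : L ≤ ∫ y, gaussDensity d σ (x - y) ∂P := by
      rw [hL, hA, ← integral_const_mul, ← integral_const_mul]
      refine integral_mono hIntL hIntG fun y => ?_
      simp only
      rw [hgd (x - y), ← Real.exp_add]
      have hxy : (x - m) - (y - m) = x - y := sub_sub_sub_cancel_right x y m
      have := hsplit (x - m) (y - m)
      rw [hxy] at this
      have hexp : -(a1 * w) + -(a2 * ‖y - m‖ ^ 2) ≤ -(‖x - y‖ ^ 2 / (2 * σ ^ 2)) := by
        rw [hw]; linarith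
      exact mul_le_mul_of_nonneg_left (Real.exp_le_exp.mpr hexp) hc0.le
    -- numerator upper bound
    have hVar : variance (fun y => gaussDensity d σ (x - y)) P ≤ c ^ 2 * I2 := by
      have h1 := variance_le_expectation_sq (μ := P)
        (X := fun y => gaussDensity d σ (x - y))
        (continuous_const.mul
          ((((continuous_const.sub continuous_id).norm.pow 2).neg.div_const _).rexp)
          |>.aestronglyMeasurable)
      refine h1.trans_eq ?_
      have h2 : ∀ y : EuclideanSpace ℝ (Fin d), ((fun y => gaussDensity d σ (x - y)) ^ 2) y
          = c ^ 2 * rexp (-(‖x - y‖ ^ 2 / σ ^ 2)) := by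
        intro y
        simp only [Pi.pow_apply]
        rw [hgd (x - y), mul_pow, ← Real.exp_nat_mul]
        congr 2
        field_simp
        ring
      rw [show (fun y => gaussDensity d σ (x - y)) ^ 2
          = fun y => c ^ 2 * rexp (-(‖x - y‖ ^ 2 / σ ^ 2)) from funext h2]
      rw [integral_const_mul, hI2]
    -- ratio bound
    have hratio : variance (fun y => gaussDensity d σ (x - y)) P /
        (∫ y, gaussDensity d σ (x - y) ∂P) ≤ (c / A) * (rexp (a1 * w) * I2) := by
      have hdiv : variance (fun y => gaussDensity d σ (x - y)) P /
          (∫ y, gaussDensity d σ (x - y) ∂P) ≤ (c ^ 2 * I2) / L :=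
        div_le_div₀ (by positivity) hVar hL0 hDL
      refine hdiv.trans_eq ?_
      rw [hL, Real.exp_neg]
      field_simp
    calc ENNReal.ofReal (variance (fun y => gaussDensity d σ (x - y)) P /
            ∫ y, gaussDensity d σ (x - y) ∂P)
        ≤ ENNReal.ofReal ((c / A) * (rexp (a1 * w) * I2)) := ENNReal.ofReal_le_ofReal hratio
      _ = ENNReal.ofReal (c / A) * (ENNReal.ofReal (rexp (a1 * w)) * ENNReal.ofReal I2) := by
          rw [ENNReal.ofReal_mul (by positivity), ENNReal.ofReal_mul (exp_pos _).le]
      _ = ENNReal.ofReal (c / A) *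
            ∫⁻ y, ENNReal.ofReal (rexp (a1 * w - ‖x - y‖ ^ 2 / σ ^ 2)) ∂P := by
          congr 1
          rw [hI2, ofReal_integral_eq_lintegral_ofReal hI2int
            (Eventually.of_forall fun y => (exp_pos _).le),
            ← lintegral_const_mul' _ _ ENNReal.ofReal_ne_top]
          refine lintegral_congr fun y => ?_
          rw [← ENNReal.ofReal_mul (exp_pos _).le, ← Real.exp_add]
          congr 1
  -- the inner x-integral
  obtain ⟨K, hK⟩ : ∃ q : ℝ≥0∞, q = ENNReal.ofReal ((π / a) ^ ((d:ℝ) / 2)) := ⟨_, rfl⟩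
  have hs' : s = (2 / σ ^ 2) ^ 2 / (4 * a) - 1 / σ ^ 2 := by
    rw [hs, ha']
    field_simp
    ring
  have hJ : ∀ y : EuclideanSpace ℝ (Fin d),
      ∫⁻ x, ENNReal.ofReal (rexp (a1 * ‖x - m‖ ^ 2 - ‖x - y‖ ^ 2 / σ ^ 2))
      = K * ENNReal.ofReal (rexp (s * ‖y - m‖ ^ 2)) := by
    intro y
    rw [hK]
    exact inner_x_integral σ a1 a s hσ2 ha0 ha hs' m y
  -- swap and conclude
  have hcont2 : Continuous fun p : EuclideanSpace ℝ (Fin d) × EuclideanSpace ℝ (Fin d) =>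
      ENNReal.ofReal (rexp (a1 * ‖p.1 - m‖ ^ 2 - ‖p.1 - p.2‖ ^ 2 / σ ^ 2)) := by
    apply ENNReal.continuous_ofReal.comp
    apply Real.continuous_exp.comp
    exact ((continuous_const.mul ((continuous_fst.sub continuous_const).norm.pow 2)).sub
      (((continuous_fst.sub continuous_snd).norm.pow 2).div_const _))
  calc ∫⁻ x, ENNReal.ofReal
        (variance (fun y => gaussDensity d σ (x - y)) P / ∫ y, gaussDensity d σ (x - y) ∂P)
      ≤ ∫⁻ x, ENNReal.ofReal (c / A) *
          ∫⁻ y, ENNReal.ofReal (rexp (a1 * ‖x - m‖ ^ 2 - ‖x - y‖ ^ 2 / σ ^ 2)) ∂P :=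
        lintegral_mono hpt
    _ = ENNReal.ofReal (c / A) * ∫⁻ x,
          ∫⁻ y, ENNReal.ofReal (rexp (a1 * ‖x - m‖ ^ 2 - ‖x - y‖ ^ 2 / σ ^ 2)) ∂P :=
        lintegral_const_mul' _ _ ENNReal.ofReal_ne_top
    _ = ENNReal.ofReal (c / A) * ∫⁻ y,
          (∫⁻ x, ENNReal.ofReal (rexp (a1 * ‖x - m‖ ^ 2 - ‖x - y‖ ^ 2 / σ ^ 2))) ∂P := by
        rw [lintegral_lintegral_swap hcont2.measurable.aemeasurable]
    _ = ENNReal.ofReal (c / A) * ∫⁻ y, K * ENNReal.ofReal (rexp (s * ‖y - m‖ ^ 2)) ∂P := by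
        congr 1
        exact lintegral_congr hJ
    _ = ENNReal.ofReal (c / A) * (K * ∫⁻ y, ENNReal.ofReal (rexp (s * ‖y - m‖ ^ 2)) ∂P) := by
        rw [lintegral_const_mul' K _ (by rw [hK]; exact ENNReal.ofReal_ne_top)]
    _ < ⊤ := by
        refine ENNReal.mul_lt_top ENNReal.ofReal_lt_top
          (ENNReal.mul_lt_top (hK ▸ ENNReal.ofReal_lt_top) ?_)
        rw [hm]
        exact moment_bound β hβ P hsub s hs0 hsβ
end

section
/- Let d ≥ 1, σ > 0, η ∈ (0,1), and let P be a Borel probability measure on ℝ^d with mean zero that is β-sub-Gaussian with β < σ√((1−η)/(2(1+η))). Then ∫_{ℝ^d} Var_P(φ_σ(x−·)) / (P∗φ_σ(x)) dx ≤ (1−η)^{−d/2} C_{P,η}^{−1} [1 − 2(1+η)β²/((1−η)σ²)]^{−d/2}, where C_{P,η} = ∫_{ℝ^d} e^{−(1+η^{−1})‖y‖²/(2σ²)} dP(y). -/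
open MeasureTheory ProbabilityTheory Real Filter
open scoped ENNReal NNReal RealInnerProductSpace

lemma gauss_lin_cast {d : ℕ} (b : ℝ) (w v : EuclideanSpace ℝ (Fin d)) :
    Complex.exp (-(b:ℂ) * (‖v‖:ℂ)^2 + (1:ℂ) * (⟪w, v⟫ : ℂ)) =
      ((Real.exp (-b * ‖v‖^2 + ⟪w, v⟫) : ℝ) : ℂ) := by
  rw [show (-(b:ℂ) * (‖v‖:ℂ)^2 + (1:ℂ) * (⟪w, v⟫ : ℂ))
      = ((-b * ‖v‖^2 + ⟪w, v⟫ : ℝ) : ℂ) by push_cast; ring]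
  exact (Complex.ofReal_exp _).symm

lemma integrable_gauss_lin {d : ℕ} {b : ℝ} (hb : 0 < b) (w : EuclideanSpace ℝ (Fin d)) :
    Integrable (fun v : EuclideanSpace ℝ (Fin d) => Real.exp (-b * ‖v‖^2 + ⟪w, v⟫)) := by
  have h := GaussianFourier.integrable_cexp_neg_mul_sq_norm_add
    (b := (b:ℂ)) (by simpa using hb) 1 w (V := EuclideanSpace ℝ (Fin d))
  have h2 : Integrable (fun v : EuclideanSpace ℝ (Fin d) =>
      ((Real.exp (-b * ‖v‖^2 + ⟪w, v⟫) : ℝ) : ℂ)) := by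
    convert h using 2 with v
    exact (gauss_lin_cast b w v).symm
  have h3 : (fun v : EuclideanSpace ℝ (Fin d) =>
      ((Real.exp (-b * ‖v‖^2 + ⟪w, v⟫) : ℝ) : ℂ).re)
      = fun v : EuclideanSpace ℝ (Fin d) => Real.exp (-b * ‖v‖^2 + ⟪w, v⟫) := by
    funext v; exact Complex.ofReal_re _
  exact h3 ▸ h2.re

lemma integral_gauss_lin {d : ℕ} {b : ℝ} (hb : 0 < b) (w : EuclideanSpace ℝ (Fin d)) :
    ∫ v : EuclideanSpace ℝ (Fin d), Real.exp (-b * ‖v‖^2 + ⟪w, v⟫) =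
      (π / b) ^ ((d:ℝ) / 2) * Real.exp (‖w‖^2 / (4*b)) := by
  have h := GaussianFourier.integral_cexp_neg_mul_sq_norm_add
    (b := (b:ℂ)) (by simpa using hb) 1 w (V := EuclideanSpace ℝ (Fin d))
  rw [← Complex.ofReal_inj]
  have key : ((∫ v : EuclideanSpace ℝ (Fin d), Real.exp (-b * ‖v‖^2 + ⟪w, v⟫) : ℝ) : ℂ)
      = ∫ v : EuclideanSpace ℝ (Fin d),
          Complex.exp (-(b:ℂ) * (‖v‖:ℂ)^2 + (1:ℂ) * (⟪w, v⟫ : ℂ)) := by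
    rw [show (∫ v : EuclideanSpace ℝ (Fin d),
          Complex.exp (-(b:ℂ) * (‖v‖:ℂ)^2 + (1:ℂ) * (⟪w, v⟫ : ℂ)))
        = ∫ v : EuclideanSpace ℝ (Fin d),
          ((Real.exp (-b * ‖v‖^2 + ⟪w, v⟫) : ℝ) : ℂ) from by
      congr 1 with v; exact gauss_lin_cast b w v]
    exact (integral_ofReal (𝕜 := ℂ)).symm
  rw [key, h]
  have hd : (Module.finrank ℝ (EuclideanSpace ℝ (Fin d)) : ℂ) = (d : ℂ) := by
    norm_cast
    simp [finrank_euclideanSpace_fin]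
  rw [hd]
  have hπb : (0:ℝ) ≤ π / b := by positivity
  rw [Complex.ofReal_mul, Complex.ofReal_exp]
  congr 1
  · rw [Complex.ofReal_cpow hπb]
    push_cast
    ring_nf
  · rw [one_pow, one_mul]
    norm_cast

lemma integrable_gauss_pure {d : ℕ} {b : ℝ} (hb : 0 < b) :
    Integrable (fun v : EuclideanSpace ℝ (Fin d) => Real.exp (-b * ‖v‖^2)) := by
  have := integrable_gauss_lin hb (0 : EuclideanSpace ℝ (Fin d))
  simpa using this

lemma integral_gauss_pure {d : ℕ} {b : ℝ} (hb : 0 < b) :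
    ∫ v : EuclideanSpace ℝ (Fin d), Real.exp (-b * ‖v‖^2) = (π / b) ^ ((d:ℝ) / 2) := by
  have := integral_gauss_lin hb (0 : EuclideanSpace ℝ (Fin d))
  simpa using this

lemma exp_sq_moment_bound {d : ℕ} {β t : ℝ} (hβ : 0 < β) (ht : 0 < t)
    (htβ : 2 * t * β^2 < 1)
    (P : Measure (EuclideanSpace ℝ (Fin d))) [IsProbabilityMeasure P]
    (hmean : ∫ z, z ∂P = 0) (hsub : IsSubGaussian d β P) :
    ∫⁻ y, ENNReal.ofReal (Real.exp (t * ‖y‖^2)) ∂P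
      ≤ ENNReal.ofReal ((1 - 2*t*β^2) ^ (-(d:ℝ)/2)) := by
  set u : ℝ := 1/(4*t) with hu_def
  have hu : 0 < u := by positivity
  have hs : 0 < u - β^2/2 := by
    have : β^2/2 < 1/(4*t) := by
      rw [div_lt_div_iff₀ (by norm_num) (by positivity)]
      nlinarith
    simpa [hu_def, sub_pos] using this
  set s : ℝ := u - β^2/2 with hs_def
  have hπ := Real.pi_pos
  have hpt : ∀ y : EuclideanSpace ℝ (Fin d), Real.exp (t*‖y‖^2) =
      (u/π)^((d:ℝ)/2) * ∫ α : EuclideanSpace ℝ (Fin d), Real.exp (-u*‖α‖^2 + ⟪y,α⟫) := by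
    intro y
    rw [integral_gauss_lin hu y]
    rw [show ‖y‖^2/(4*u) = t*‖y‖^2 by rw [hu_def]; field_simp]
    rw [← mul_assoc, ← Real.mul_rpow (by positivity) (by positivity),
      show u/π*(π/u) = 1 by field_simp, Real.one_rpow, one_mul]
  have hsub' : ∀ α : EuclideanSpace ℝ (Fin d),
      ∫⁻ y, ENNReal.ofReal (Real.exp ⟪α, y⟫) ∂P
        ≤ ENNReal.ofReal (Real.exp (β ^ 2 * ‖α‖ ^ 2 / 2)) := by
    intro α
    have h := hsub α
    simpa [hmean] using h
  have hmeas : AEMeasurable (Function.uncurry fun (y α : EuclideanSpace ℝ (Fin d)) =>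
      ENNReal.ofReal (Real.exp (-u*‖α‖^2 + ⟪y,α⟫))) (P.prod volume) := by
    apply Measurable.aemeasurable
    apply Measurable.ennreal_ofReal
    apply Continuous.measurable
    apply Real.continuous_exp.comp
    exact ((continuous_const.mul ((continuous_snd.norm).pow 2)).add continuous_inner)
  calc ∫⁻ y, ENNReal.ofReal (Real.exp (t*‖y‖^2)) ∂P
      = ∫⁻ y, ENNReal.ofReal ((u/π)^((d:ℝ)/2)) *
          ∫⁻ α, ENNReal.ofReal (Real.exp (-u*‖α‖^2 + ⟪y,α⟫)) ∂volume ∂P := by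
        apply lintegral_congr
        intro y
        rw [hpt y, ENNReal.ofReal_mul (by positivity),
          ofReal_integral_eq_lintegral_ofReal (integrable_gauss_lin hu y)
            (ae_of_all _ fun α => Real.exp_nonneg _)]
    _ = ENNReal.ofReal ((u/π)^((d:ℝ)/2)) *
          ∫⁻ y, ∫⁻ α, ENNReal.ofReal (Real.exp (-u*‖α‖^2 + ⟪y,α⟫)) ∂volume ∂P :=
        lintegral_const_mul' _ _ ENNReal.ofReal_ne_top
    _ = ENNReal.ofReal ((u/π)^((d:ℝ)/2)) *
          ∫⁻ α, ∫⁻ y, ENNReal.ofReal (Real.exp (-u*‖α‖^2 + ⟪y,α⟫)) ∂P ∂volume := by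
        rw [lintegral_lintegral_swap hmeas]
    _ ≤ ENNReal.ofReal ((u/π)^((d:ℝ)/2)) *
          ∫⁻ α : EuclideanSpace ℝ (Fin d), ENNReal.ofReal (Real.exp (-s*‖α‖^2)) ∂volume := by
        apply mul_le_mul_right
        apply lintegral_mono
        intro α
        calc ∫⁻ y, ENNReal.ofReal (Real.exp (-u*‖α‖^2 + ⟪y,α⟫)) ∂P
            = ENNReal.ofReal (Real.exp (-u*‖α‖^2)) *
                ∫⁻ y, ENNReal.ofReal (Real.exp ⟪α,y⟫) ∂P := by
              rw [← lintegral_const_mul' _ _ ENNReal.ofReal_ne_top]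
              apply lintegral_congr
              intro y
              rw [← ENNReal.ofReal_mul (Real.exp_nonneg _), ← Real.exp_add]
              congr 2
              rw [real_inner_comm]
          _ ≤ ENNReal.ofReal (Real.exp (-u*‖α‖^2)) *
                ENNReal.ofReal (Real.exp (β ^ 2 * ‖α‖ ^ 2 / 2)) :=
              mul_le_mul_right (hsub' α) _
          _ = ENNReal.ofReal (Real.exp (-s*‖α‖^2)) := by
              rw [← ENNReal.ofReal_mul (Real.exp_nonneg _), ← Real.exp_add]
              congr 1
              rw [hs_def]
              ring
    _ = ENNReal.ofReal ((u/π)^((d:ℝ)/2)) * ENNReal.ofReal ((π/s)^((d:ℝ)/2)) := by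
        rw [← ofReal_integral_eq_lintegral_ofReal (integrable_gauss_pure hs)
          (ae_of_all _ fun α => Real.exp_nonneg _), integral_gauss_pure hs]
    _ = ENNReal.ofReal ((1 - 2*t*β^2) ^ (-(d:ℝ)/2)) := by
        rw [← ENNReal.ofReal_mul (by positivity),
          ← Real.mul_rpow (by positivity) (by positivity)]
        congr 1
        have h1 : (0:ℝ) < 1 - 2*t*β^2 := by linarith
        have hus2 : u * (1 - 2*t*β^2) = s := by
          rw [hs_def, hu_def]; field_simp; ring
        have hus : u/π*(π/s) = (1 - 2*t*β^2)⁻¹ := by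
          have e1 : u/π*(π/s) = u/s := by
            field_simp
          rw [e1, inv_eq_one_div, div_eq_div_iff hs.ne' h1.ne']
          linarith
        rw [hus, neg_div, Real.rpow_neg h1.le, ← Real.inv_rpow h1.le]

set_option maxHeartbeats 2000000

/-- **Explicit bound on the χ² integral for sub-Gaussian `P`:** for `η ∈ (0,1)` and
mean-zero `β`-sub-Gaussian `P` with `β < σ√((1−η)/(2(1+η)))`,
`∫ Var_P(φ_σ(x−·))/(P∗φ_σ(x)) dx ≤ (1−η)^{−d/2} C_{P,η}⁻¹ (1 − 2(1+η)β²/((1−η)σ²))^{−d/2}`. -/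
theorem chiSq_integral_explicit_bound
    (d : ℕ) (hd : 1 ≤ d) (σ : ℝ) (hσ : 0 < σ) (η : ℝ) (hη : η ∈ Set.Ioo (0 : ℝ) 1)
    (β : ℝ) (hβ : 0 < β) (hβσ : β < σ * Real.sqrt ((1 - η) / (2 * (1 + η))))
    (P : Measure (EuclideanSpace ℝ (Fin d))) [IsProbabilityMeasure P]
    (hmean : ∫ z, z ∂P = 0) (hsub : IsSubGaussian d β P) :
    ∫⁻ x, ENNReal.ofReal
        (variance (fun y => gaussDensity d σ (x - y)) P / ∫ y, gaussDensity d σ (x - y) ∂P)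
      ≤ ENNReal.ofReal ((1 - η) ^ (-(d : ℝ) / 2) *
          (∫ y, Real.exp (-(1 + η⁻¹) * ‖y‖ ^ 2 / (2 * σ ^ 2)) ∂P)⁻¹ *
          (1 - 2 * (1 + η) * β ^ 2 / ((1 - η) * σ ^ 2)) ^ (-(d : ℝ) / 2)) := by
  obtain ⟨hη0, hη1⟩ := hη
  have h1η : (0:ℝ) < 1 - η := by linarith
  have h1pη : (0:ℝ) < 1 + η := by linarith
  have hπ := Real.pi_pos
  set E := EuclideanSpace ℝ (Fin d)
  set K : ℝ := (2 * π * σ ^ 2) ^ (-(d : ℝ) / 2) with hK_def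
  have hA : (0:ℝ) < 2 * π * σ ^ 2 := by positivity
  have hK : 0 < K := Real.rpow_pos_of_pos hA _
  set a : ℝ := (1 - η) / (2 * σ ^ 2) with ha_def
  have ha : 0 < a := by positivity
  set t : ℝ := (1 + η) / ((1 - η) * σ ^ 2) with ht_def
  have ht : 0 < t := by positivity
  set C : ℝ := ∫ y, Real.exp (-(1 + η⁻¹) * ‖y‖ ^ 2 / (2 * σ ^ 2)) ∂P with hC_def
  -- basic facts about gaussDensity
  have hφ_cont : Continuous (gaussDensity d σ) := by
    unfold gaussDensity
    fun_prop
  have hφ_nonneg : ∀ z : E, 0 ≤ gaussDensity d σ z := by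
    intro z
    unfold gaussDensity
    positivity
  have hφ_le : ∀ z : E, gaussDensity d σ z ≤ K := by
    intro z
    unfold gaussDensity
    rw [← hK_def]
    nth_rewrite 2 [← mul_one K]
    apply mul_le_mul_of_nonneg_left _ hK.le
    rw [Real.exp_le_one_iff]
    have : (0:ℝ) ≤ ‖z‖^2 := sq_nonneg _
    have : (0:ℝ) < 2*σ^2 := by positivity
    apply div_nonpos_of_nonpos_of_nonneg <;> [skip; positivity]
    simpa using sq_nonneg ‖z‖
  have hbdd_int : ∀ (f : E → ℝ) (B : ℝ), Continuous f → (∀ y, |f y| ≤ B) → Integrable f P := by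
    intro f B hf hB
    exact Integrable.mono' (integrable_const B) hf.aestronglyMeasurable
      (ae_of_all _ fun y => by simpa [Real.norm_eq_abs] using hB y)
  have hφ_int : ∀ x : E, Integrable (fun y => gaussDensity d σ (x - y)) P := by
    intro x
    apply hbdd_int _ K (hφ_cont.comp (continuous_const.sub continuous_id))
    intro y
    simpa [abs_of_nonneg (hφ_nonneg _)] using hφ_le (x - y)
  have hsq_int : ∀ x : E, Integrable (fun y => (gaussDensity d σ (x - y))^2) P := by
    intro x
    apply hbdd_int _ (K^2) (((hφ_cont.comp (continuous_const.sub continuous_id)).pow 2))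
    intro y
    have h2 : |(gaussDensity d σ (x - y))^2| = (gaussDensity d σ (x - y))^2 :=
      abs_of_nonneg (sq_nonneg _)
    simpa [h2] using pow_le_pow_left₀ (hφ_nonneg (x-y)) (hφ_le (x-y)) 2
  -- C is positive
  have hC_cont : Continuous (fun y : E => Real.exp (-(1 + η⁻¹) * ‖y‖ ^ 2 / (2 * σ ^ 2))) := by
    fun_prop
  have hC_int : Integrable (fun y : E => Real.exp (-(1 + η⁻¹) * ‖y‖ ^ 2 / (2 * σ ^ 2))) P := by
    apply hbdd_int _ 1 hC_cont
    intro y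
    have h2 : |Real.exp (-(1 + η⁻¹) * ‖y‖ ^ 2 / (2 * σ ^ 2))| = Real.exp (-(1 + η⁻¹) * ‖y‖ ^ 2 / (2 * σ ^ 2)) := abs_of_nonneg (Real.exp_nonneg _)
    rw [h2, Real.exp_le_one_iff]
    have hη' : (0:ℝ) < 1 + η⁻¹ := by positivity
    apply div_nonpos_of_nonpos_of_nonneg
    · have : (0:ℝ) ≤ (1 + η⁻¹) * ‖y‖^2 := by positivity
      linarith
    · positivity
  have hC : 0 < C := by
    rw [hC_def, integral_pos_iff_support_of_nonneg (fun y => Real.exp_nonneg _) hC_int]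
    have : (Function.support fun y : E => Real.exp (-(1 + η⁻¹) * ‖y‖ ^ 2 / (2 * σ ^ 2)))
        = Set.univ := by
      ext y; simp [Function.mem_support, (Real.exp_pos _).ne']
    rw [this]
    simp
  -- 2tβ² < 1
  have hr : (0:ℝ) ≤ (1 - η) / (2 * (1 + η)) := by positivity
  have hβ2 : β^2 < σ^2 * ((1-η)/(2*(1+η))) := by
    have h2 := mul_self_lt_mul_self hβ.le hβσ
    have h3 : (σ * Real.sqrt ((1-η)/(2*(1+η)))) * (σ * Real.sqrt ((1-η)/(2*(1+η))))
        = σ^2 * ((1-η)/(2*(1+η))) := by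
      rw [show (σ * Real.sqrt ((1-η)/(2*(1+η)))) * (σ * Real.sqrt ((1-η)/(2*(1+η))))
          = σ^2 * (Real.sqrt ((1-η)/(2*(1+η))) * Real.sqrt ((1-η)/(2*(1+η)))) from by ring,
        Real.mul_self_sqrt hr]
    rw [sq]
    exact h2.trans_eq h3
  have htβ : 2*t*β^2 < 1 := by
    have heq : 2*t*(σ^2 * ((1-η)/(2*(1+η)))) = 1 := by
      rw [ht_def]
      field_simp
    calc 2*t*β^2 < 2*t*(σ^2*((1-η)/(2*(1+η)))) := by
          exact mul_lt_mul_of_pos_left hβ2 (by positivity)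
      _ = 1 := heq
  -- variance bound
  have hVar_le : ∀ x : E, variance (fun y => gaussDensity d σ (x-y)) P
      ≤ ∫ y, (gaussDensity d σ (x-y))^2 ∂P := by
    intro x
    have h := variance_le_expectation_sq (μ := P) (X := fun y => gaussDensity d σ (x-y))
      ((hφ_cont.comp (continuous_const.sub continuous_id)).aestronglyMeasurable)
    simpa using h
  -- denominator lower bound
  set g : E → ℝ := fun x => (1+η)*‖x‖^2/(2*σ^2) with hg_def
  have h2σ : (0:ℝ) < 2*σ^2 := by positivity
  have hden_lb : ∀ x : E, K * Real.exp (-(g x)) * C ≤ ∫ y, gaussDensity d σ (x-y) ∂P := by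
    intro x
    have hpt : ∀ y : E, K * Real.exp (-(g x)) * Real.exp (-(1 + η⁻¹) * ‖y‖^2 / (2*σ^2))
        ≤ gaussDensity d σ (x-y) := by
      intro y
      unfold gaussDensity
      rw [← hK_def, mul_assoc, ← Real.exp_add]
      apply mul_le_mul_of_nonneg_left _ hK.le
      rw [Real.exp_le_exp]
      have hxy : ‖x-y‖^2 ≤ ‖x‖^2 + 2*‖x‖*‖y‖ + ‖y‖^2 := by
        nlinarith [norm_sub_le x y, norm_nonneg (x-y), norm_nonneg x, norm_nonneg y]
      have h3 : η*η⁻¹ = 1 := mul_inv_cancel₀ hη0.ne'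
      have hamgm : 2*‖x‖*‖y‖ ≤ η*‖x‖^2 + η⁻¹*‖y‖^2 := by
        rw [← sub_nonneg]
        have h4 : η*‖x‖^2 + η⁻¹*‖y‖^2 - 2*‖x‖*‖y‖ = (η*‖x‖ - ‖y‖)^2 / η := by
          field_simp; ring
        rw [h4]; positivity
      have key : ‖x-y‖^2 ≤ (1+η)*‖x‖^2 + (1+η⁻¹)*‖y‖^2 := by linarith [hxy, hamgm]
      calc -(g x) + -(1 + η⁻¹) * ‖y‖^2 / (2*σ^2)
          = -((1+η)*‖x‖^2 + (1+η⁻¹)*‖y‖^2)/(2*σ^2) := by rw [hg_def]; ring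
        _ ≤ -‖x-y‖^2/(2*σ^2) := by gcongr
    calc K * Real.exp (-(g x)) * C
        = ∫ y, K * Real.exp (-(g x)) * Real.exp (-(1 + η⁻¹) * ‖y‖^2 / (2*σ^2)) ∂P := by
          rw [hC_def, ← integral_const_mul]
      _ ≤ ∫ y, gaussDensity d σ (x-y) ∂P :=
          integral_mono (hC_int.const_mul _) (hφ_int x) hpt
  have hlb_pos : ∀ x : E, 0 < K * Real.exp (-(g x)) * C :=
    fun x => mul_pos (mul_pos hK (Real.exp_pos _)) hC
  -- the auxiliary kernel H
  set H : E → E → ℝ := fun x y =>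
    Real.exp (-a*‖x‖^2 + ⟪(2/σ^2) • y, x⟫) * Real.exp (-‖y‖^2/σ^2) with hH_def
  have hH_nonneg : ∀ x y, 0 ≤ H x y :=
    fun x y => mul_nonneg (Real.exp_nonneg _) (Real.exp_nonneg _)
  have hHφ : ∀ x y : E, Real.exp (g x) * (gaussDensity d σ (x-y))^2 = K^2 * H x y := by
    intro x y
    unfold gaussDensity
    rw [← hK_def]
    simp only [hH_def]
    rw [show K ^ 2 * (Real.exp (-a*‖x‖^2 + ⟪(2/σ^2) • y, x⟫) * Real.exp (-‖y‖^2/σ^2))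
        = K^2 * Real.exp ((-a*‖x‖^2 + ⟪(2/σ^2) • y, x⟫) + -‖y‖^2/σ^2) from by
      simp only [Real.exp_add]; try ring]
    rw [show Real.exp (g x) * (K * Real.exp (-‖x-y‖^2/(2*σ^2)))^2
        = K^2 * Real.exp (g x + (-‖x-y‖^2/(2*σ^2) + -‖x-y‖^2/(2*σ^2))) from by
      simp only [Real.exp_add]; try ring]
    congr 1
    have hin : ⟪(2/σ^2) • y, x⟫ = (2/σ^2) * ⟪x, y⟫ := by
      rw [real_inner_smul_left, real_inner_comm]
    have hn : ‖x-y‖^2 = ‖x‖^2 - 2*⟪x,y⟫ + ‖y‖^2 := norm_sub_sq_real x y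
    rw [hin, hn]
    simp only [hg_def, ha_def]
    field_simp
    ring
  have hH_eq : ∀ x : E, (fun y => H x y)
      = fun y => (K^2)⁻¹ * (Real.exp (g x) * (gaussDensity d σ (x-y))^2) := by
    intro x
    funext y
    rw [hHφ x y]
    field_simp
  have hH_int : ∀ x : E, Integrable (fun y => H x y) P := by
    intro x
    rw [hH_eq x]
    exact (((hsq_int x).const_mul _).const_mul _)
  have hH_intval : ∀ x : E, ∫ y, H x y ∂P
      = (K^2)⁻¹ * (Real.exp (g x) * ∫ y, (gaussDensity d σ (x-y))^2 ∂P) := by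
    intro x
    calc ∫ y, H x y ∂P
        = ∫ y, (K^2)⁻¹ * (Real.exp (g x) * (gaussDensity d σ (x-y))^2) ∂P := by rw [← hH_eq x]
      _ = (K^2)⁻¹ * (Real.exp (g x) * ∫ y, (gaussDensity d σ (x-y))^2 ∂P) := by
          rw [integral_const_mul, integral_const_mul]
  -- pointwise bound
  have hpoint : ∀ x : E, ENNReal.ofReal
      (variance (fun y => gaussDensity d σ (x - y)) P / ∫ y, gaussDensity d σ (x - y) ∂P)
      ≤ ENNReal.ofReal (K*C⁻¹) * ∫⁻ y, ENNReal.ofReal (H x y) ∂P := by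
    intro x
    have h1 : variance (fun y => gaussDensity d σ (x-y)) P / ∫ y, gaussDensity d σ (x-y) ∂P
        ≤ (∫ y, (gaussDensity d σ (x-y))^2 ∂P) / (K * Real.exp (-(g x)) * C) :=
      div_le_div₀ (integral_nonneg fun y => sq_nonneg _) (hVar_le x) (hlb_pos x) (hden_lb x)
    have h2 : (∫ y, (gaussDensity d σ (x-y))^2 ∂P) / (K * Real.exp (-(g x)) * C)
        = (K*C⁻¹) * ∫ y, H x y ∂P := by
      rw [hH_intval x, Real.exp_neg]
      field_simp
    calc ENNReal.ofReal (variance (fun y => gaussDensity d σ (x - y)) P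
            / ∫ y, gaussDensity d σ (x - y) ∂P)
        ≤ ENNReal.ofReal ((∫ y, (gaussDensity d σ (x-y))^2 ∂P)
            / (K * Real.exp (-(g x)) * C)) := ENNReal.ofReal_le_ofReal h1
      _ = ENNReal.ofReal ((K*C⁻¹) * ∫ y, H x y ∂P) := by rw [h2]
      _ = ENNReal.ofReal (K*C⁻¹) * ENNReal.ofReal (∫ y, H x y ∂P) :=
          ENNReal.ofReal_mul (by positivity)
      _ = ENNReal.ofReal (K*C⁻¹) * ∫⁻ y, ENNReal.ofReal (H x y) ∂P := by
          rw [ofReal_integral_eq_lintegral_ofReal (hH_int x)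
            (ae_of_all _ fun y => hH_nonneg x y)]
  -- x-integral of H
  have hx_int : ∀ y : E, Integrable (fun x => H x y) (volume : Measure E) :=
    fun y => (integrable_gauss_lin ha _).mul_const _
  have hx_val : ∀ y : E, ∫ x, H x y = (π/a)^((d:ℝ)/2) * Real.exp (t*‖y‖^2) := by
    intro y
    calc ∫ x, H x y
        = (∫ x : E, Real.exp (-a*‖x‖^2 + ⟪(2/σ^2) • y, x⟫)) * Real.exp (-‖y‖^2/σ^2) :=
          integral_mul_const _ _
      _ = (π/a)^((d:ℝ)/2) * Real.exp (‖(2/σ^2) • y‖^2/(4*a)) * Real.exp (-‖y‖^2/σ^2) := by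
          rw [integral_gauss_lin ha]
      _ = (π/a)^((d:ℝ)/2) * Real.exp (t*‖y‖^2) := by
          rw [mul_assoc, ← Real.exp_add]
          congr 2
          have hns : ‖(2/σ^2) • y‖^2 = (2/σ^2)^2*‖y‖^2 := by
            rw [norm_smul, mul_pow]
            congr 1
            rw [Real.norm_eq_abs, sq_abs]
          rw [hns, ha_def, ht_def]
          field_simp
          ring
  have hmeas2 : AEMeasurable (Function.uncurry fun (x y : E) =>
      ENNReal.ofReal (H x y)) ((volume : Measure E).prod P) := by
    apply Measurable.aemeasurable
    apply Measurable.ennreal_ofReal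
    apply Continuous.measurable
    apply Continuous.mul
    · apply Real.continuous_exp.comp
      apply Continuous.add
      · exact (continuous_const.mul ((continuous_fst.norm (E := EuclideanSpace ℝ (Fin d))).pow 2))
      · exact continuous_inner.comp ((continuous_snd.const_smul (2/σ^2 : ℝ)).prodMk continuous_fst)
    · apply Real.continuous_exp.comp
      exact ((continuous_snd.norm (E := EuclideanSpace ℝ (Fin d)) |>.pow 2).neg.div_const _)
  -- main chain
  calc ∫⁻ x, ENNReal.ofReal
        (variance (fun y => gaussDensity d σ (x - y)) P / ∫ y, gaussDensity d σ (x - y) ∂P)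
      ≤ ∫⁻ x, ENNReal.ofReal (K*C⁻¹) * ∫⁻ y, ENNReal.ofReal (H x y) ∂P :=
        lintegral_mono hpoint
    _ = ENNReal.ofReal (K*C⁻¹) * ∫⁻ x, ∫⁻ y, ENNReal.ofReal (H x y) ∂P ∂volume :=
        lintegral_const_mul' _ _ ENNReal.ofReal_ne_top
    _ = ENNReal.ofReal (K*C⁻¹) * ∫⁻ y, ∫⁻ x, ENNReal.ofReal (H x y) ∂volume ∂P := by
        rw [lintegral_lintegral_swap hmeas2]
    _ = ENNReal.ofReal (K*C⁻¹) * ∫⁻ y, ENNReal.ofReal ((π/a)^((d:ℝ)/2))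
          * ENNReal.ofReal (Real.exp (t*‖y‖^2)) ∂P := by
        congr 1
        apply lintegral_congr
        intro y
        rw [← ofReal_integral_eq_lintegral_ofReal (hx_int y)
          (ae_of_all _ fun x => hH_nonneg x y), hx_val y, ENNReal.ofReal_mul (by positivity)]
    _ = ENNReal.ofReal (K*C⁻¹) * (ENNReal.ofReal ((π/a)^((d:ℝ)/2))
          * ∫⁻ y, ENNReal.ofReal (Real.exp (t*‖y‖^2)) ∂P) := by
        rw [lintegral_const_mul' _ _ ENNReal.ofReal_ne_top]
    _ ≤ ENNReal.ofReal (K*C⁻¹) * (ENNReal.ofReal ((π/a)^((d:ℝ)/2))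
          * ENNReal.ofReal ((1 - 2*t*β^2) ^ (-(d:ℝ)/2))) := by
        gcongr
        exact exp_sq_moment_bound hβ ht htβ P hmean hsub
    _ = ENNReal.ofReal ((1 - η) ^ (-(d : ℝ) / 2) * C⁻¹ *
          (1 - 2 * (1 + η) * β ^ 2 / ((1 - η) * σ ^ 2)) ^ (-(d : ℝ) / 2)) := by
        rw [← ENNReal.ofReal_mul (by positivity), ← ENNReal.ofReal_mul (by positivity)]
        congr 1
        have hbase : 1 - 2*t*β^2 = 1 - 2*(1+η)*β^2/((1-η)*σ^2) := by
          rw [ht_def]; ring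
        have hKpa : K * (π/a)^((d:ℝ)/2) = (1-η)^(-(d:ℝ)/2) := by
          rw [hK_def, ha_def,
            show π / ((1-η)/(2*σ^2)) = (2*π*σ^2)/(1-η) from by field_simp,
            Real.div_rpow hA.le h1η.le,
            show -(d:ℝ)/2 = -((d:ℝ)/2) from neg_div _ _,
            Real.rpow_neg hA.le, Real.rpow_neg h1η.le]
          field_simp
        rw [← hbase, ← hKpa]
        ring
end

section
/- Let d ≥ 1, σ > 0, and let P be a Borel probability measure on ℝ^d that is β-sub-Gaussian for some β > 0, and suppose that X − E[X], for X ~ P, has a Lebesgue density bounded from below by c·e^{−‖x‖²/(2γ)} for some positive constants c, γ. If β < √((σ² + 2γ)/2), then ∫_{ℝ^d} Var_P(φ_σ(x−·)) / (P∗φ_σ(x)) dx < ∞. -/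
open MeasureTheory ProbabilityTheory Real Filter
open scoped ENNReal NNReal RealInnerProductSpace

namespace ChiSqAux


variable {d : ℕ}

local notation "E" => EuclideanSpace ℝ (Fin d)

lemma gauss_integral {b : ℝ} (hb : 0 < b) :
    ∫ v : E, rexp (-(b * ‖v‖ ^ 2)) = (π / b) ^ ((d : ℝ) / 2) := by
  simp only [← neg_mul]
  rw [GaussianFourier.integral_rexp_neg_mul_sq_norm hb, finrank_euclideanSpace_fin]

lemma gauss_integrable {b : ℝ} (hb : 0 < b) :
    Integrable (fun v : E => rexp (-(b * ‖v‖ ^ 2))) := by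
  have h := (GaussianFourier.integrable_cexp_neg_mul_sq_norm_add (V := E)
    (b := (b : ℂ)) (by simpa using hb) 0 0).norm
  refine h.congr (Filter.Eventually.of_forall fun v => ?_)
  simp only [Complex.norm_exp]
  congr 1
  simp only [Complex.add_re, Complex.mul_re, Complex.neg_re, Complex.zero_re, Complex.zero_im,
    zero_mul, sub_zero, add_zero]
  norm_cast
  ring

lemma gauss_integral_shift {b : ℝ} (hb : 0 < b) (w : E) :
    ∫ v : E, rexp (-(b * ‖v - w‖ ^ 2)) = (π / b) ^ ((d : ℝ) / 2) := by
  rw [integral_sub_right_eq_self (fun v : E => rexp (-(b * ‖v‖ ^ 2))) w]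
  exact gauss_integral hb

lemma gauss_integrable_shift {b : ℝ} (hb : 0 < b) (w : E) :
    Integrable (fun v : E => rexp (-(b * ‖v - w‖ ^ 2))) :=
  (gauss_integrable hb).comp_sub_right w

lemma denom_exponent {σ γ : ℝ} (hσ : 0 < σ) (hγ : 0 < γ) (u z : E) :
    -‖u - z‖ ^ 2 / (2 * σ ^ 2) + -‖z‖ ^ 2 / (2 * γ)
      = -((σ ^ 2 + γ) / (2 * σ ^ 2 * γ) * ‖z - (γ / (σ ^ 2 + γ)) • u‖ ^ 2)
        + -‖u‖ ^ 2 / (2 * (σ ^ 2 + γ)) := by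
  have h1 : ‖u - z‖ ^ 2 = ‖u‖ ^ 2 - 2 * ⟪u, z⟫ + ‖z‖ ^ 2 := norm_sub_sq_real u z
  have h2 : ‖z - (γ / (σ ^ 2 + γ)) • u‖ ^ 2
      = ‖z‖ ^ 2 - 2 * ((γ / (σ ^ 2 + γ)) * ⟪z, u⟫) + (γ / (σ ^ 2 + γ)) ^ 2 * ‖u‖ ^ 2 := by
    rw [norm_sub_sq_real, real_inner_smul_right, norm_smul, Real.norm_eq_abs, mul_pow, sq_abs]
  have hsg : σ ^ 2 + γ ≠ 0 := by positivity
  have hs2 : σ ^ 2 ≠ 0 := by positivity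
  have hg : γ ≠ 0 := ne_of_gt hγ
  rw [h1, h2, real_inner_comm z u]
  field_simp
  ring

lemma mgf_exponent {b : ℝ} (hb : 0 < b) (α z : E) :
    ⟪α, z⟫ - b * ‖α‖ ^ 2
      = -(b * ‖α - (1 / (2 * b)) • z‖ ^ 2) + 1 / (4 * b) * ‖z‖ ^ 2 := by
  have h2 : ‖α - (1 / (2 * b)) • z‖ ^ 2
      = ‖α‖ ^ 2 - 2 * ((1 / (2 * b)) * ⟪α, z⟫) + (1 / (2 * b)) ^ 2 * ‖z‖ ^ 2 := by
    rw [norm_sub_sq_real, real_inner_smul_right, norm_smul, Real.norm_eq_abs, mul_pow, sq_abs]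
  have hb' : b ≠ 0 := ne_of_gt hb
  rw [h2]
  field_simp
  ring

lemma key_ineq {s σ : ℝ} (hs0 : 0 < s) (hs1 : s < 1) (hσ : 0 < σ) (u z : E) :
    -‖u - z‖ ^ 2 / σ ^ 2 ≤ -(s * ‖u‖ ^ 2) / σ ^ 2 + s / ((1 - s) * σ ^ 2) * ‖z‖ ^ 2 := by
  have h1s : (0 : ℝ) < 1 - s := by linarith
  have hσ2 : (0 : ℝ) < σ ^ 2 := by positivity
  have h1 : ‖u - z‖ ^ 2 = ‖u‖ ^ 2 - 2 * ⟪u, z⟫ + ‖z‖ ^ 2 := norm_sub_sq_real u z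
  have h2 : ⟪u, z⟫ ≤ ‖u‖ * ‖z‖ := real_inner_le_norm u z
  have hq : s * (1 - s) * ‖u‖ ^ 2 - s * ‖z‖ ^ 2 ≤ (1 - s) * ‖u - z‖ ^ 2 := by
    nlinarith [sq_nonneg ((1 - s) * ‖u‖ - ‖z‖), norm_nonneg u, norm_nonneg z,
      mul_le_mul_of_nonneg_left h2 h1s.le]
  have h3 : -(s * ‖u‖ ^ 2) / σ ^ 2 + s / ((1 - s) * σ ^ 2) * ‖z‖ ^ 2 - (-‖u - z‖ ^ 2 / σ ^ 2)
      = ((1 - s) * ‖u - z‖ ^ 2 - (s * (1 - s) * ‖u‖ ^ 2 - s * ‖z‖ ^ 2)) / ((1 - s) * σ ^ 2) := by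
    field_simp
    ring
  have h4 : 0 ≤ ((1 - s) * ‖u - z‖ ^ 2 - (s * (1 - s) * ‖u‖ ^ 2 - s * ‖z‖ ^ 2))
      / ((1 - s) * σ ^ 2) := div_nonneg (by linarith) (by positivity)
  linarith [h3 ▸ h4]


set_option maxHeartbeats 1000000 in
lemma subG_exp_sq (β lam : ℝ) (hβ : 0 < β) (hlam : 0 < lam) (hcond : 2 * lam * β ^ 2 < 1)
    (P : Measure E) [IsProbabilityMeasure P] (m : E)
    (hsub : ∀ α : E, ∫⁻ y, ENNReal.ofReal (rexp ⟪α, y - m⟫) ∂P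
      ≤ ENNReal.ofReal (rexp (β ^ 2 * ‖α‖ ^ 2 / 2))) :
    ∫⁻ y, ENNReal.ofReal (rexp (lam * ‖y - m‖ ^ 2)) ∂P
      ≤ ENNReal.ofReal ((4 * π * lam) ^ (-(d : ℝ) / 2)
          * (π / (1 / (4 * lam) - β ^ 2 / 2)) ^ ((d : ℝ) / 2)) := by
  set b : ℝ := 1 / (4 * lam) with hbdef
  have hb : 0 < b := by rw [hbdef]; positivity
  have hbβ : 0 < b - β ^ 2 / 2 := by
    rw [hbdef, sub_pos, div_lt_div_iff₀ (by norm_num) (by positivity)]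
    nlinarith
  have hc1 : 1 / (4 * b) = lam := by rw [hbdef]; field_simp
  have hπb : π / b = 4 * π * lam := by
    rw [hbdef]; field_simp
  have hcoeff : (0:ℝ) < (4 * π * lam) ^ (-(d : ℝ) / 2) := by
    apply Real.rpow_pos_of_pos; positivity
  -- pointwise identity
  have hpt : ∀ z : E, ENNReal.ofReal (rexp (lam * ‖z‖ ^ 2))
      = ENNReal.ofReal ((4 * π * lam) ^ (-(d : ℝ) / 2))
        * ∫⁻ α : E, ENNReal.ofReal (rexp (⟪α, z⟫ - b * ‖α‖ ^ 2)) := by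
    intro z
    have hptα : ∀ α : E, rexp (⟪α, z⟫ - b * ‖α‖ ^ 2)
        = rexp (lam * ‖z‖ ^ 2) * rexp (-(b * ‖α - (1 / (2 * b)) • z‖ ^ 2)) := by
      intro α
      rw [← Real.exp_add, mgf_exponent hb α z, hc1]
      congr 1; ring
    have hint : Integrable (fun α : E => rexp (⟪α, z⟫ - b * ‖α‖ ^ 2)) := by
      refine ((gauss_integrable_shift hb ((1 / (2 * b)) • z)).const_mul
        (rexp (lam * ‖z‖ ^ 2))).congr (Filter.Eventually.of_forall fun α => ?_)
      exact (hptα α).symm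
    rw [← ofReal_integral_eq_lintegral_ofReal hint
      (Filter.Eventually.of_forall fun α => (Real.exp_pos _).le)]
    have hval : ∫ α : E, rexp (⟪α, z⟫ - b * ‖α‖ ^ 2)
        = rexp (lam * ‖z‖ ^ 2) * (π / b) ^ ((d : ℝ) / 2) := by
      rw [integral_congr_ae (Filter.Eventually.of_forall hptα), integral_const_mul _ _,
        gauss_integral_shift hb]
    rw [hval, ← ENNReal.ofReal_mul hcoeff.le]
    congr 1
    rw [hπb, ← mul_assoc, mul_comm ((4 * π * lam) ^ (-(d:ℝ)/2)), mul_assoc,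
      ← Real.rpow_add (by positivity), show (-(d:ℝ)/2 + (d:ℝ)/2) = 0 by ring,
      Real.rpow_zero, mul_one]
  have hmeas : AEMeasurable (Function.uncurry fun (y α : E) =>
      ENNReal.ofReal (rexp (⟪α, y - m⟫ - b * ‖α‖ ^ 2))) (P.prod volume) := by
    have hcont : Continuous fun q : E × E => rexp (⟪q.2, q.1 - m⟫ - b * ‖q.2‖ ^ 2) := by
      apply Real.continuous_exp.comp
      exact (continuous_inner.comp (continuous_snd.prodMk
        (continuous_fst.sub continuous_const))).sub
        (continuous_const.mul ((continuous_norm.comp continuous_snd).pow 2))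
    have heq : (Function.uncurry fun (y α : E) =>
        ENNReal.ofReal (rexp (⟪α, y - m⟫ - b * ‖α‖ ^ 2)))
        = fun q : E × E => ENNReal.ofReal (rexp (⟪q.2, q.1 - m⟫ - b * ‖q.2‖ ^ 2)) := rfl
    rw [heq]
    exact (ENNReal.continuous_ofReal.comp hcont).measurable.aemeasurable
  calc ∫⁻ y, ENNReal.ofReal (rexp (lam * ‖y - m‖ ^ 2)) ∂P
      = ∫⁻ y, (ENNReal.ofReal ((4 * π * lam) ^ (-(d : ℝ) / 2))
          * ∫⁻ α : E, ENNReal.ofReal (rexp (⟪α, y - m⟫ - b * ‖α‖ ^ 2))) ∂P :=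
        lintegral_congr fun y => hpt (y - m)
    _ = ENNReal.ofReal ((4 * π * lam) ^ (-(d : ℝ) / 2))
          * ∫⁻ y, (∫⁻ α : E, ENNReal.ofReal (rexp (⟪α, y - m⟫ - b * ‖α‖ ^ 2))) ∂P :=
        lintegral_const_mul' _ _ ENNReal.ofReal_ne_top
    _ = ENNReal.ofReal ((4 * π * lam) ^ (-(d : ℝ) / 2))
          * ∫⁻ α : E, (∫⁻ y, ENNReal.ofReal (rexp (⟪α, y - m⟫ - b * ‖α‖ ^ 2)) ∂P) := by
        rw [lintegral_lintegral_swap hmeas]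
    _ ≤ ENNReal.ofReal ((4 * π * lam) ^ (-(d : ℝ) / 2))
        * ∫⁻ α : E, ENNReal.ofReal (rexp (-((b - β ^ 2 / 2) * ‖α‖ ^ 2))) := by
        refine mul_le_mul_right (lintegral_mono fun α => ?_) _
        have e1 : ∀ y : E, ENNReal.ofReal (rexp (⟪α, y - m⟫ - b * ‖α‖ ^ 2))
            = ENNReal.ofReal (rexp (-(b * ‖α‖ ^ 2))) * ENNReal.ofReal (rexp ⟪α, y - m⟫) := by
          intro y
          rw [← ENNReal.ofReal_mul (Real.exp_pos _).le, ← Real.exp_add]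
          congr 2; ring
        calc ∫⁻ y, ENNReal.ofReal (rexp (⟪α, y - m⟫ - b * ‖α‖ ^ 2)) ∂P
            = ENNReal.ofReal (rexp (-(b * ‖α‖ ^ 2)))
              * ∫⁻ y, ENNReal.ofReal (rexp ⟪α, y - m⟫) ∂P := by
              rw [lintegral_congr e1, lintegral_const_mul' _ _ ENNReal.ofReal_ne_top]
          _ ≤ ENNReal.ofReal (rexp (-(b * ‖α‖ ^ 2)))
              * ENNReal.ofReal (rexp (β ^ 2 * ‖α‖ ^ 2 / 2)) := mul_le_mul_right (hsub α) _
          _ = ENNReal.ofReal (rexp (-((b - β ^ 2 / 2) * ‖α‖ ^ 2))) := by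
              rw [← ENNReal.ofReal_mul (Real.exp_pos _).le, ← Real.exp_add]
              congr 2; ring
    _ = ENNReal.ofReal ((4 * π * lam) ^ (-(d : ℝ) / 2))
        * ENNReal.ofReal ((π / (b - β ^ 2 / 2)) ^ ((d : ℝ) / 2)) := by
        rw [← ofReal_integral_eq_lintegral_ofReal (gauss_integrable hbβ)
          (Filter.Eventually.of_forall fun α => (Real.exp_pos _).le), gauss_integral hbβ]
    _ = ENNReal.ofReal ((4 * π * lam) ^ (-(d : ℝ) / 2)
        * (π / (b - β ^ 2 / 2)) ^ ((d : ℝ) / 2)) := (ENNReal.ofReal_mul hcoeff.le).symm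


lemma gaussDensity_def (σ : ℝ) (x : E) :
    gaussDensity d σ x = (2 * π * σ ^ 2) ^ (-(d : ℝ) / 2) * rexp (-‖x‖ ^ 2 / (2 * σ ^ 2)) := rfl

lemma gaussDensity_continuous (σ : ℝ) : Continuous (gaussDensity d σ) :=
  continuous_const.mul (Real.continuous_exp.comp (((continuous_norm.pow 2)).neg.div_const _))

end ChiSqAux

open ChiSqAux in
set_option maxHeartbeats 2000000 in
/-- **χ² integrability condition under a Gaussian density lower bound:** if `P` is
`β`-sub-Gaussian and the centered measure has a Lebesgue density bounded below by
`c e^{−‖x‖²/(2γ)}`, and `β < √((σ²+2γ)/2)`, then `∫ Var_P(φ_σ(x−·))/(P∗φ_σ(x)) dx < ∞`. -/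
theorem chiSq_condition_of_density_lower_bound
    (d : ℕ) (hd : 1 ≤ d) (σ : ℝ) (hσ : 0 < σ) (β : ℝ) (hβ : 0 < β)
    (c γ : ℝ) (hc : 0 < c) (hγ : 0 < γ)
    (P : Measure (EuclideanSpace ℝ (Fin d))) [IsProbabilityMeasure P]
    (hsub : IsSubGaussian d β P)
    (p : EuclideanSpace ℝ (Fin d) → ℝ) (hp : Measurable p)
    (hPd : P.map (fun y => y - ∫ z, z ∂P) = volume.withDensity fun x => ENNReal.ofReal (p x))
    (hlow : ∀ x, c * Real.exp (-‖x‖ ^ 2 / (2 * γ)) ≤ p x)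
    (hβb : β < Real.sqrt ((σ ^ 2 + 2 * γ) / 2)) :
    ∫⁻ x, ENNReal.ofReal
        (variance (fun y => gaussDensity d σ (x - y)) P / ∫ y, gaussDensity d σ (x - y) ∂P)
      < ⊤ := by
  classical
  set m : EuclideanSpace ℝ (Fin d) := ∫ z, z ∂P with hm
  have hσ2 : (0:ℝ) < σ ^ 2 := by positivity
  have hβ2 : β ^ 2 < (σ ^ 2 + 2 * γ) / 2 := (Real.lt_sqrt hβ.le).mp hβb
  have hden1 : (0:ℝ) < 2 * (σ ^ 2 + γ) := by positivity
  have hden2 : (0:ℝ) < σ ^ 2 + 2 * β ^ 2 := by positivity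
  set s : ℝ := (σ ^ 2 / (2 * (σ ^ 2 + γ)) + σ ^ 2 / (σ ^ 2 + 2 * β ^ 2)) / 2 with hs_def
  have hA : σ ^ 2 / (2 * (σ ^ 2 + γ)) < σ ^ 2 / (σ ^ 2 + 2 * β ^ 2) := by
    rw [div_lt_div_iff₀ hden1 hden2]; nlinarith
  have hs_lo : σ ^ 2 / (2 * (σ ^ 2 + γ)) < s := by rw [hs_def]; linarith
  have hs_hi : s < σ ^ 2 / (σ ^ 2 + 2 * β ^ 2) := by rw [hs_def]; linarith
  have hs0 : 0 < s := lt_trans (by positivity) hs_lo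
  have hs1 : s < 1 := by
    have h1 : σ ^ 2 / (σ ^ 2 + 2 * β ^ 2) < 1 := by
      rw [div_lt_one hden2]; nlinarith
    linarith
  have h1s : (0:ℝ) < 1 - s := by linarith
  set lam : ℝ := s / ((1 - s) * σ ^ 2) with hlam_def
  have hlam : 0 < lam := by rw [hlam_def]; positivity
  have hcond : 2 * lam * β ^ 2 < 1 := by
    have h1 : s * (σ ^ 2 + 2 * β ^ 2) < σ ^ 2 := (lt_div_iff₀ hden2).mp hs_hi
    rw [hlam_def, show 2 * (s / ((1 - s) * σ ^ 2)) * β ^ 2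
      = (2 * s * β ^ 2) / ((1 - s) * σ ^ 2) by ring, div_lt_one (by positivity)]
    nlinarith
  set kap : ℝ := s / σ ^ 2 - 1 / (2 * (σ ^ 2 + γ)) with hkap_def
  have hkap : 0 < kap := by
    rw [hkap_def, sub_pos, div_lt_div_iff₀ hden1 hσ2]
    have h1 : σ ^ 2 < s * (2 * (σ ^ 2 + γ)) := (div_lt_iff₀ hden1).mp hs_lo
    linarith
  set cf : ℝ := (2 * π * σ ^ 2) ^ (-(d : ℝ) / 2) with hcf_def
  have hcf : 0 < cf := by rw [hcf_def]; apply Real.rpow_pos_of_pos; positivity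
  set a : ℝ := (σ ^ 2 + γ) / (2 * σ ^ 2 * γ) with ha_def
  have ha : 0 < a := by rw [ha_def]; positivity
  set C1 : ℝ := c * cf * (π / a) ^ ((d : ℝ) / 2) with hC1_def
  have hC1 : 0 < C1 := by
    rw [hC1_def]; apply mul_pos (mul_pos hc hcf); apply Real.rpow_pos_of_pos; positivity
  have hbβ : (0:ℝ) < 1 / (4 * lam) - β ^ 2 / 2 := by
    rw [sub_pos, div_lt_div_iff₀ (by norm_num) (by positivity)]; nlinarith
  set M : ℝ := (4 * π * lam) ^ (-(d : ℝ) / 2)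
    * (π / (1 / (4 * lam) - β ^ 2 / 2)) ^ ((d : ℝ) / 2) with hM_def
  have hM : 0 < M := by
    rw [hM_def]
    apply mul_pos <;> apply Real.rpow_pos_of_pos
    · positivity
    · positivity
  set C2 : ℝ := cf ^ 2 * M / C1 with hC2_def
  have hC2 : 0 < C2 := by rw [hC2_def]; positivity
  have hMb := subG_exp_sq β lam hβ hlam hcond P m (fun α => hsub α)
  have hsub_eq : ∀ x y : EuclideanSpace ℝ (Fin d), x - y = (x - m) - (y - m) :=
    fun x y => (sub_sub_sub_cancel_right x y m).symm
  -- pointwise bound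
  have hpoint : ∀ x : EuclideanSpace ℝ (Fin d),
      variance (fun y => gaussDensity d σ (x - y)) P / (∫ y, gaussDensity d σ (x - y) ∂P)
        ≤ C2 * rexp (-(kap * ‖x - m‖ ^ 2)) := by
    intro x
    set u : EuclideanSpace ℝ (Fin d) := x - m with hu
    set f : EuclideanSpace ℝ (Fin d) → ℝ := fun y => gaussDensity d σ (x - y) with hf
    have hfc : Continuous f :=
      (gaussDensity_continuous σ).comp (continuous_const.sub continuous_id)
    have hfnn : ∀ y, 0 ≤ f y := fun y => by
      rw [hf]; simp only; rw [gaussDensity_def]; positivity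
    have hfb : ∀ y, f y ≤ cf := fun y => by
      rw [hf]; simp only; rw [gaussDensity_def, ← hcf_def]
      have h1 : rexp (-‖x - y‖ ^ 2 / (2 * σ ^ 2)) ≤ 1 := by
        apply Real.exp_le_one_iff.mpr
        rw [neg_div]
        exact neg_nonpos.mpr (by positivity)
      exact mul_le_of_le_one_right hcf.le h1
    have hflt : ∫⁻ y, ENNReal.ofReal (f y) ∂P ≤ ENNReal.ofReal cf := by
      calc ∫⁻ y, ENNReal.ofReal (f y) ∂P
          ≤ ∫⁻ _, ENNReal.ofReal cf ∂P :=
            lintegral_mono fun y => ENNReal.ofReal_le_ofReal (hfb y)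
        _ = ENNReal.ofReal cf := by simp [lintegral_const]
    have hne : ∫⁻ y, ENNReal.ofReal (f y) ∂P ≠ ⊤ :=
      (lt_of_le_of_lt hflt ENNReal.ofReal_lt_top).ne
    have hDint : ∫ y, f y ∂P = (∫⁻ y, ENNReal.ofReal (f y) ∂P).toReal :=
      integral_eq_lintegral_of_nonneg_ae (Filter.Eventually.of_forall hfnn)
        hfc.aestronglyMeasurable
    -- identify the lintegral via the density
    have hgm : Measurable fun z : EuclideanSpace ℝ (Fin d) =>
        ENNReal.ofReal (gaussDensity d σ (u - z)) :=
      ENNReal.measurable_ofReal.comp ((gaussDensity_continuous σ).measurable.comp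
        (measurable_const.sub measurable_id))
    have hmap : ∫⁻ y, ENNReal.ofReal (f y) ∂P
        = ∫⁻ z, ENNReal.ofReal (p z) * ENNReal.ofReal (gaussDensity d σ (u - z)) := by
      have h1 : ∀ y : EuclideanSpace ℝ (Fin d), ENNReal.ofReal (f y)
          = (fun z => ENNReal.ofReal (gaussDensity d σ (u - z))) (y - m) := by
        intro y
        simp only [hf, hu]
        rw [← hsub_eq]
      have h2 : ∫⁻ z, ENNReal.ofReal (gaussDensity d σ (u - z)) ∂(P.map (fun y => y - m))
          = ∫⁻ y, ENNReal.ofReal (f y) ∂P := by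
        rw [lintegral_map (g := fun y : EuclideanSpace ℝ (Fin d) => y - m) hgm
          (measurable_id.sub measurable_const)]
        exact lintegral_congr fun y => (h1 y).symm
      rw [← h2, hPd,
        lintegral_withDensity_eq_lintegral_mul volume (hp.ennreal_ofReal) hgm]
      rfl
    have hlow2 : ENNReal.ofReal (C1 * rexp (-‖u‖ ^ 2 / (2 * (σ ^ 2 + γ))))
        ≤ ∫⁻ y, ENNReal.ofReal (f y) ∂P := by
      rw [hmap]
      have step1 : ∫⁻ z, ENNReal.ofReal
            ((c * rexp (-‖z‖ ^ 2 / (2 * γ))) * gaussDensity d σ (u - z))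
          ≤ ∫⁻ z, ENNReal.ofReal (p z) * ENNReal.ofReal (gaussDensity d σ (u - z)) := by
        refine lintegral_mono fun z => ?_
        rw [ENNReal.ofReal_mul (by positivity)]
        exact mul_le_mul_left (ENNReal.ofReal_le_ofReal (hlow z)) _
      refine le_trans (le_of_eq ?_) step1
      have hid : ∀ z : EuclideanSpace ℝ (Fin d),
          (c * rexp (-‖z‖ ^ 2 / (2 * γ))) * gaussDensity d σ (u - z)
          = (c * cf * rexp (-‖u‖ ^ 2 / (2 * (σ ^ 2 + γ))))
            * rexp (-(a * ‖z - (γ / (σ ^ 2 + γ)) • u‖ ^ 2)) := by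
        intro z
        rw [gaussDensity_def, ← hcf_def]
        have h := denom_exponent (d := d) hσ hγ u z
        calc (c * rexp (-‖z‖ ^ 2 / (2 * γ))) * (cf * rexp (-‖u - z‖ ^ 2 / (2 * σ ^ 2)))
            = c * cf * rexp (-‖u - z‖ ^ 2 / (2 * σ ^ 2) + -‖z‖ ^ 2 / (2 * γ)) := by
              rw [Real.exp_add]; ring
          _ = c * cf * rexp (-((σ ^ 2 + γ) / (2 * σ ^ 2 * γ) * ‖z - (γ / (σ ^ 2 + γ)) • u‖ ^ 2)
                + -‖u‖ ^ 2 / (2 * (σ ^ 2 + γ))) := by rw [h]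
          _ = (c * cf * rexp (-‖u‖ ^ 2 / (2 * (σ ^ 2 + γ))))
                * rexp (-(a * ‖z - (γ / (σ ^ 2 + γ)) • u‖ ^ 2)) := by
              rw [Real.exp_add, ha_def]; ring
      rw [lintegral_congr fun z => congrArg ENNReal.ofReal (hid z)]
      rw [← ofReal_integral_eq_lintegral_ofReal
        (((gauss_integrable_shift ha ((γ / (σ ^ 2 + γ)) • u)).const_mul _))
        (Filter.Eventually.of_forall fun z => by positivity)]
      rw [integral_const_mul _ _, gauss_integral_shift ha]
      congr 1
      rw [hC1_def]; ring
    have hDlow : C1 * rexp (-‖u‖ ^ 2 / (2 * (σ ^ 2 + γ))) ≤ ∫ y, f y ∂P := by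
      rw [hDint]
      have h2 := ENNReal.toReal_mono hne hlow2
      rwa [ENNReal.toReal_ofReal (by positivity)] at h2
    have hDpos : 0 < ∫ y, f y ∂P := lt_of_lt_of_le (by positivity) hDlow
    -- numerator
    have hmem : MemLp f 2 P := MemLp.of_bound hfc.aestronglyMeasurable cf
      (Filter.Eventually.of_forall fun y => by
        rw [Real.norm_eq_abs, abs_of_nonneg (hfnn y)]; exact hfb y)
    have hvar : variance f P ≤ ∫ y, (f y) ^ 2 ∂P := by
      rw [variance_eq_sub hmem]
      simp only [Pi.pow_apply]
      nlinarith [sq_nonneg (∫ y, f y ∂P)]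
    have hNum : variance f P ≤ cf ^ 2 * rexp (-(s * ‖u‖ ^ 2) / σ ^ 2) * M := by
      refine le_trans hvar ?_
      have hf2c : Continuous fun y => (f y) ^ 2 := hfc.pow 2
      have h2 : ∫ y, (f y) ^ 2 ∂P = (∫⁻ y, ENNReal.ofReal ((f y) ^ 2) ∂P).toReal :=
        integral_eq_lintegral_of_nonneg_ae
          (Filter.Eventually.of_forall fun y => sq_nonneg _) hf2c.aestronglyMeasurable
      have h3 : ∫⁻ y, ENNReal.ofReal ((f y) ^ 2) ∂P
          ≤ ENNReal.ofReal (cf ^ 2 * rexp (-(s * ‖u‖ ^ 2) / σ ^ 2))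
            * ∫⁻ y, ENNReal.ofReal (rexp (lam * ‖y - m‖ ^ 2)) ∂P := by
        rw [← lintegral_const_mul' _ _ ENNReal.ofReal_ne_top]
        refine lintegral_mono fun y => ?_
        rw [← ENNReal.ofReal_mul (by positivity)]
        apply ENNReal.ofReal_le_ofReal
        have hsqe : ∀ t : ℝ, rexp t ^ 2 = rexp (2 * t) := fun t => by
          rw [pow_two, ← Real.exp_add]; ring_nf
        have e1 : (f y) ^ 2 = cf ^ 2 * rexp (-‖u - (y - m)‖ ^ 2 / σ ^ 2) := by
          rw [hf]; simp only
          rw [gaussDensity_def, ← hcf_def, mul_pow, hsqe, hu, ← hsub_eq x y]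
          exact congrArg (fun t => cf ^ 2 * rexp t) (by ring)
        rw [e1]
        have hki := key_ineq hs0 hs1 hσ u (y - m)
        rw [← hlam_def] at hki
        calc cf ^ 2 * rexp (-‖u - (y - m)‖ ^ 2 / σ ^ 2)
            ≤ cf ^ 2 * rexp (-(s * ‖u‖ ^ 2) / σ ^ 2 + lam * ‖y - m‖ ^ 2) := by
              apply mul_le_mul_of_nonneg_left (Real.exp_le_exp.mpr hki) (sq_nonneg cf)
          _ = cf ^ 2 * rexp (-(s * ‖u‖ ^ 2) / σ ^ 2) * rexp (lam * ‖y - m‖ ^ 2) := by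
              rw [Real.exp_add]; ring
      have h4 : ∫⁻ y, ENNReal.ofReal ((f y) ^ 2) ∂P
          ≤ ENNReal.ofReal (cf ^ 2 * rexp (-(s * ‖u‖ ^ 2) / σ ^ 2) * M) := by
        rw [ENNReal.ofReal_mul (by positivity)]
        exact le_trans h3 (mul_le_mul_right hMb _)
      rw [h2]
      exact ENNReal.toReal_le_of_le_ofReal (by positivity) h4
    -- combine
    rw [div_le_iff₀ hDpos]
    calc variance f P ≤ cf ^ 2 * rexp (-(s * ‖u‖ ^ 2) / σ ^ 2) * M := hNum
      _ = (C2 * rexp (-(kap * ‖u‖ ^ 2))) * (C1 * rexp (-‖u‖ ^ 2 / (2 * (σ ^ 2 + γ)))) := by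
          rw [show (C2 * rexp (-(kap * ‖u‖ ^ 2))) * (C1 * rexp (-‖u‖ ^ 2 / (2 * (σ ^ 2 + γ))))
            = (C2 * C1) * rexp (-(kap * ‖u‖ ^ 2) + -‖u‖ ^ 2 / (2 * (σ ^ 2 + γ))) by
              rw [Real.exp_add]; ring]
          have e3 : C2 * C1 = cf ^ 2 * M := by
            rw [hC2_def]; field_simp
          have e4 : -(kap * ‖u‖ ^ 2) + -‖u‖ ^ 2 / (2 * (σ ^ 2 + γ)) = -(s * ‖u‖ ^ 2) / σ ^ 2 := by
            rw [hkap_def]; field_simp; ring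
          rw [e3, e4]
          ring
      _ ≤ (C2 * rexp (-(kap * ‖u‖ ^ 2))) * (∫ y, f y ∂P) := by
          apply mul_le_mul_of_nonneg_left hDlow (by positivity)
  -- conclude
  have hint2 : Integrable (fun x : EuclideanSpace ℝ (Fin d) =>
      C2 * rexp (-(kap * ‖x - m‖ ^ 2))) := (gauss_integrable_shift hkap m).const_mul C2
  calc ∫⁻ x, ENNReal.ofReal
        (variance (fun y => gaussDensity d σ (x - y)) P / ∫ y, gaussDensity d σ (x - y) ∂P)
      ≤ ∫⁻ x, ENNReal.ofReal (C2 * rexp (-(kap * ‖x - m‖ ^ 2))) :=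
        lintegral_mono fun x => ENNReal.ofReal_le_ofReal (hpoint x)
    _ = ENNReal.ofReal (∫ x, C2 * rexp (-(kap * ‖x - m‖ ^ 2))) :=
        (ofReal_integral_eq_lintegral_ofReal hint2
          (Filter.Eventually.of_forall fun x => by positivity)).symm
    _ < ⊤ := ENNReal.ofReal_lt_top
end
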